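/- (Gibbs implies DLR.) Let X ⊆ 𝒜^{ℤ^d} be a subshift and f ∈ SV_d(X). If μ is a Gibbs measure for f, then for every nonempty finite Λ ⊆ ℤ^d and every Borel set A ⊆ X, the conditional expectation satisfies μ(A | 𝓕_{Λ^c})(x) = γ_Λ(A|x) for μ-almost every x ∈ X. -/

import Mathlib

open MeasureTheory Filter Topology

/-- The full shift configuration space `𝒜^{ℤ^d}`. -/
abbrev Config (d : ℕ) (A : Type*) := (Fin d → ℤ) → A

/-- The shift action of `ℤ^d`: `(T^k x)_i = x_{i+k}`. -/
def shift {d : ℕ} {A : Type*} (k : Fin d → ℤ) (x : Config d A) : Config d A :=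
  fun i => x (i + k)

/-- The ℓ∞ norm of a lattice point, `‖k‖_∞ = max_i |k_i|`. -/
def normInf {d : ℕ} (k : Fin d → ℤ) : ℕ :=
  Finset.univ.sup fun i => (k i).natAbs

/-- The box `Λ_N = {k : ‖k‖_∞ ≤ N}` as a finset. -/
noncomputable def boxF (d N : ℕ) : Finset (Fin d → ℤ) :=
  Finset.Icc (fun _ => -(N : ℤ)) (fun _ => (N : ℤ))

/-- The `n`-th variation of `f` on a subshift `X`:
`δ_n(f) = sup {|f x - f y| : x, y ∈ X, x_{Λ_n} = y_{Λ_n}}`. -/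
noncomputable def deltaVar {d : ℕ} {A : Type*} (X : Set (Config d A))
    (f : Config d A → ℝ) (n : ℕ) : ℝ :=
  sSup {r : ℝ | ∃ x ∈ X, ∃ y ∈ X,
    (∀ k : Fin d → ℤ, normInf k ≤ n → x k = y k) ∧ r = |f x - f y|}

/-- `f` is bounded on `X`. -/
def BoundedOn {d : ℕ} {A : Type*} (X : Set (Config d A)) (f : Config d A → ℝ) : Prop :=
  ∃ C : ℝ, ∀ x ∈ X, |f x| ≤ C

/-- Membership in `SV_d(X)`: bounded with `Σ_{n ≥ 1} n^{d-1} δ_n(f) < ∞`. -/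
def MemSV (d : ℕ) {A : Type*} (X : Set (Config d A)) (f : Config d A → ℝ) : Prop :=
  BoundedOn X f ∧ Summable fun n : ℕ => ((n : ℝ) + 1) ^ (d - 1) * deltaVar X f (n + 1)

/-- The sup norm of `f` over `X`. -/
noncomputable def supNormOn {d : ℕ} {A : Type*} (X : Set (Config d A))
    (f : Config d A → ℝ) : ℝ :=
  sSup {r : ℝ | ∃ x ∈ X, r = |f x|}

/-- The `SV_d` norm: `‖f‖_{SV_d} = ‖f‖_∞ + Σ_{n ≥ 1} n^{d-1} δ_n(f)`. -/
noncomputable def svNorm (d : ℕ) {A : Type*} (X : Set (Config d A))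
    (f : Config d A → ℝ) : ℝ :=
  supNormOn X f + ∑' n : ℕ, ((n : ℝ) + 1) ^ (d - 1) * deltaVar X f (n + 1)

/-- The Gibbs relation `𝔗`: pairs of points of `X` that agree outside a finite set. -/
def gibbsRel {d : ℕ} {A : Type*} (X : Set (Config d A)) :
    Set (Config d A × Config d A) :=
  {p | p.1 ∈ X ∧ p.2 ∈ X ∧ ∃ Λ : Finset (Fin d → ℤ), ∀ k ∉ Λ, p.1 k = p.2 k}

/-- The cocycle `φ_f(x,y) = Σ_{k ∈ ℤ^d} (f(T^k y) - f(T^k x))` (unordered sum). -/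
noncomputable def phiF {d : ℕ} {A : Type*} (f : Config d A → ℝ)
    (x y : Config d A) : ℝ :=
  ∑' k : Fin d → ℤ, (f (shift k y) - f (shift k x))

/-- Membership in `𝓕(X)`: homeomorphisms of `X` changing only finitely many coordinates,
uniformly. -/
def memF {d : ℕ} {A : Type*} [TopologicalSpace A] (X : Set (Config d A))
    (φ : ↥X ≃ₜ ↥X) : Prop :=
  ∃ n : ℕ, 1 ≤ n ∧ ∀ x : ↥X, ∀ k : Fin d → ℤ, n < normInf k → (φ x).1 k = x.1 k

/-- `𝓕_n(X)`. -/
def Fn {d : ℕ} {A : Type*} [TopologicalSpace A] (X : Set (Config d A)) (n : ℕ) :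
    Set (↥X ≃ₜ ↥X) :=
  {φ | (∀ x : ↥X, ∀ k : Fin d → ℤ, n < normInf k → (φ x).1 k = x.1 k) ∧
    ∀ x y : ↥X,
      ((∀ k : Fin d → ℤ, normInf k ≤ n → x.1 k = y.1 k) ↔
        (∀ k : Fin d → ℤ, normInf k ≤ n → (φ x).1 k = (φ y).1 k))}

/-- The configuration `ω x_{Λ^c}`: equal to `ω` on `Λ` and to `x` off `Λ`. -/
def patch {d : ℕ} {A : Type*} (Λ : Finset (Fin d → ℤ)) (ω : {k // k ∈ Λ} → A)
    (x : Config d A) : Config d A :=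
  fun k => if h : k ∈ Λ then ω ⟨k, h⟩ else x k

/-- `f_n = Σ_{i ∈ Λ_n} f ∘ T^i`. -/
noncomputable def fnSum (d : ℕ) {A : Type*} (f : Config d A → ℝ) (n : ℕ)
    (z : Config d A) : ℝ :=
  ∑ i ∈ boxF d n, f (shift i z)

/-- The σ-algebra `𝓕_Δ` on `X`, generated by the coordinate projections `x ↦ x_i`, `i ∈ Δ`. -/
def cylSigma {d : ℕ} {A : Type*} [MeasurableSpace A] (X : Set (Config d A))
    (Δ : Set (Fin d → ℤ)) : MeasurableSpace ↥X :=
  MeasurableSpace.comap (fun (x : ↥X) (i : ↥Δ) => x.1 i.1) MeasurableSpace.pi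

/-- `μ` is a Gibbs measure for `f`: `(φ_f, 𝔗)`-conformal. -/
def IsGibbs (d : ℕ) {A : Type*} [MeasurableSpace A] (X : Set (Config d A))
    (f : Config d A → ℝ) (μ : Measure ↥X) : Prop :=
  ∀ V W : ↥X → ↥X, Measurable V → Measurable W →
    (∀ x, W (V x) = x) → (∀ x, V (W x) = x) →
    (∀ x : ↥X, ((x.1, (V x).1) ∈ gibbsRel X)) →
    (Measure.map V μ ≪ μ ∧
      ∀ᵐ x ∂μ, (Measure.map V μ).rnDeriv μ x
        = ENNReal.ofReal (Real.exp (phiF f x.1 (W x).1)))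

/-- `μ` is a topological Gibbs measure for `f`: `(φ_f|_{𝔗⁰}, 𝔗⁰)`-conformal. -/
def IsTopGibbs (d : ℕ) {A : Type*} [TopologicalSpace A] [MeasurableSpace A]
    (X : Set (Config d A)) (f : Config d A → ℝ) (μ : Measure ↥X) : Prop :=
  ∀ φ : ↥X ≃ₜ ↥X, memF X φ →
    (Measure.map (⇑φ) μ ≪ μ ∧
      ∀ᵐ x ∂μ, (Measure.map (⇑φ) μ).rnDeriv μ x
        = ENNReal.ofReal (Real.exp (phiF f x.1 (φ.symm x).1)))

/-- Finite-volume Gibbsian ratios defining the kernel `γ_Λ`. -/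
noncomputable def gammaFn (d : ℕ) {A : Type*} [Fintype A] (X : Set (Config d A))
    (f : Config d A → ℝ) (Λ : Finset (Fin d → ℤ)) (S : Set ↥X) (x : Config d A)
    (n : ℕ) : ℝ :=
  (∑ ω : {k // k ∈ Λ} → A,
      (Subtype.val '' S).indicator (fun z => Real.exp (fnSum d f n z)) (patch Λ ω x)) /
  (∑ η : {k // k ∈ Λ} → A,
      X.indicator (fun z => Real.exp (fnSum d f n z)) (patch Λ η x))

/-- The kernel `γ_Λ(S | x)`, defined as the limit of the finite-volume ratios. -/
noncomputable def gamma (d : ℕ) {A : Type*} [Fintype A] (X : Set (Config d A))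
    (f : Config d A → ℝ) (Λ : Finset (Fin d → ℤ)) (S : Set ↥X) (x : Config d A) : ℝ :=
  limUnder atTop (gammaFn d X f Λ S x)

/-- `X` is a subshift of finite type. -/
def IsSFT {d : ℕ} {A : Type*} (X : Set (Config d A)) : Prop :=
  ∃ n : ℕ, 1 ≤ n ∧ ∃ F : Set ({k : Fin d → ℤ // normInf k ≤ n} → A),
    X = {x : Config d A |
      ∀ l : Fin d → ℤ, (fun k : {k : Fin d → ℤ // normInf k ≤ n} => shift l x k.1) ∉ F}

/-- The topological Gibbs relation `𝔗⁰`. -/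
def topGibbsRel {d : ℕ} {A : Type*} [TopologicalSpace A] (X : Set (Config d A)) :
    Set (Config d A × Config d A) :=
  {p | ∃ (hx : p.1 ∈ X) (φ : ↥X ≃ₜ ↥X), memF X φ ∧ (φ ⟨p.1, hx⟩).1 = p.2}

/-- `f` is a local function on `X`. -/
def IsLocal {d : ℕ} {A : Type*} (X : Set (Config d A)) (f : Config d A → ℝ) : Prop :=
  ∃ Λ : Finset (Fin d → ℤ), ∀ x ∈ X, ∀ y ∈ X, (∀ k ∈ Λ, x k = y k) → f x = f y

section AuxBasic

open Finset

variable {d : ℕ} {A : Type*}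

lemma mem_boxF {k : Fin d → ℤ} {N : ℕ} : k ∈ boxF d N ↔ normInf k ≤ N := by
  simp only [boxF, Finset.mem_Icc, normInf, Finset.sup_le_iff, Finset.mem_univ, true_implies,
    Pi.le_def]
  constructor
  · rintro ⟨h1, h2⟩ i
    have := h1 i; have := h2 i; omega
  · intro h
    constructor <;> intro i <;> (have := h i; omega)

lemma boxF_mono {N M : ℕ} (h : N ≤ M) : boxF d N ⊆ boxF d M := by
  intro k hk; rw [mem_boxF] at *; omega

lemma continuous_shift [TopologicalSpace A] (k : Fin d → ℤ) :
    Continuous (shift (A := A) k) :=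
  continuous_pi fun i => continuous_apply (i + k)

lemma continuous_patch [TopologicalSpace A] (Λ : Finset (Fin d → ℤ)) (ω : {k // k ∈ Λ} → A) :
    Continuous (patch Λ ω) := by
  refine continuous_pi fun i => ?_
  by_cases h : i ∈ Λ
  · simpa [patch, h] using continuous_const
  · simpa [patch, h] using continuous_apply i

lemma patch_mem {Λ : Finset (Fin d → ℤ)} {ω : {k // k ∈ Λ} → A} {x : Config d A}
    {k : Fin d → ℤ} (h : k ∈ Λ) : patch Λ ω x k = ω ⟨k, h⟩ := by
  simp [patch, h]

lemma patch_not_mem {Λ : Finset (Fin d → ℤ)} {ω : {k // k ∈ Λ} → A} {x : Config d A}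
    {k : Fin d → ℤ} (h : k ∉ Λ) : patch Λ ω x k = x k := by
  simp [patch, h]

lemma patch_patch {Λ : Finset (Fin d → ℤ)} (ω η : {k // k ∈ Λ} → A) (x : Config d A) :
    patch Λ ω (patch Λ η x) = patch Λ ω x := by
  funext k
  by_cases h : k ∈ Λ
  · rw [patch_mem h, patch_mem h]
  · rw [patch_not_mem h, patch_not_mem h, patch_not_mem h]

/-- restriction of a configuration to Λ -/
def resP (Λ : Finset (Fin d → ℤ)) (x : Config d A) : {k // k ∈ Λ} → A := fun k => x k.1

lemma patch_resP (Λ : Finset (Fin d → ℤ)) (x : Config d A) : patch Λ (resP Λ x) x = x := by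
  funext k
  by_cases h : k ∈ Λ
  · rw [patch_mem h]; rfl
  · rw [patch_not_mem h]

lemma resP_patch (Λ : Finset (Fin d → ℤ)) (ω : {k // k ∈ Λ} → A) (x : Config d A) :
    resP Λ (patch Λ ω x) = ω := by
  funext k; exact patch_mem k.2

lemma patch_eq_self {Λ : Finset (Fin d → ℤ)} {ω : {k // k ∈ Λ} → A} {x : Config d A}
    (h : resP Λ x = ω) : patch Λ ω x = x := by
  subst h; exact patch_resP Λ x

end AuxBasic
section AuxVar

open Finset

variable {d : ℕ} {A : Type*} {X : Set (Config d A)} {f : Config d A → ℝ} {C : ℝ}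

lemma deltaVar_le (hfb : ∀ x ∈ X, |f x| ≤ C) {x y : Config d A} (hx : x ∈ X) (hy : y ∈ X)
    {n : ℕ} (h : ∀ k : Fin d → ℤ, normInf k ≤ n → x k = y k) :
    |f x - f y| ≤ deltaVar X f n := by
  apply le_csSup
  · refine ⟨2 * C, ?_⟩
    rintro r ⟨a, ha, b, hb, -, rfl⟩
    calc |f a - f b| ≤ |f a| + |f b| := abs_sub _ _
    _ ≤ C + C := add_le_add (hfb a ha) (hfb b hb)
    _ = 2 * C := by ring
  · exact ⟨x, hx, y, hy, h, rfl⟩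

lemma deltaVar_nonneg (hfb : ∀ x ∈ X, |f x| ≤ C) {x : Config d A} (hx : x ∈ X) (n : ℕ) :
    0 ≤ deltaVar X f n := by
  have := deltaVar_le hfb hx hx (n := n) (fun _ _ => rfl)
  simpa using this

lemma card_boxF (d N : ℕ) : (boxF d N).card = (2 * N + 1) ^ d := by
  rw [boxF, Pi.card_Icc]
  have : ∀ i : Fin d, (Finset.Icc (-(N:ℤ)) (N:ℤ)).card = 2 * N + 1 := by
    intro i; rw [Int.card_Icc]; omega
  rw [Finset.prod_congr rfl (fun i _ => this i)]
  simp [Finset.prod_const]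

lemma card_boxF_sdiff (d N : ℕ) :
    ((boxF d (N+1) \ boxF d N).card : ℝ) = ((2*(N+1)+1:ℕ):ℝ)^d - ((2*N+1:ℕ):ℝ)^d := by
  rw [Finset.card_sdiff_of_subset (boxF_mono (Nat.le_succ N))]
  have h1 := card_boxF d (N+1)
  have h2 := card_boxF d N
  have hle : (boxF d N).card ≤ (boxF d (N+1)).card :=
    Finset.card_le_card (boxF_mono (Nat.le_succ N))
  push_cast [h1, h2]
  rw [Nat.cast_sub (by omega : (2*N+1)^d ≤ (2*(N+1)+1)^d)]
  push_cast; ring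

lemma pow_sub_pow_le {x y : ℝ} (hy : 0 ≤ y) (hxy : y ≤ x) (n : ℕ) :
    x ^ n - y ^ n ≤ n * (x - y) * x ^ (n - 1) := by
  rw [← geom_sum₂_mul x y n]
  have hx : 0 ≤ x := le_trans hy hxy
  have hterm : ∀ i ∈ Finset.range n, x ^ i * y ^ (n - 1 - i) ≤ x ^ (n - 1) := by
    intro i hi
    rw [Finset.mem_range] at hi
    calc x ^ i * y ^ (n - 1 - i) ≤ x ^ i * x ^ (n - 1 - i) := by
          apply mul_le_mul_of_nonneg_left (pow_le_pow_left₀ hy hxy _) (pow_nonneg hx _)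
    _ = x ^ (i + (n - 1 - i)) := (pow_add x i (n-1-i)).symm
    _ = x ^ (n - 1) := by congr 1; omega
  calc (∑ i ∈ Finset.range n, x ^ i * y ^ (n - 1 - i)) * (x - y)
      ≤ (n * x ^ (n-1)) * (x - y) := by
        apply mul_le_mul_of_nonneg_right _ (by linarith)
        calc (∑ i ∈ Finset.range n, x ^ i * y ^ (n - 1 - i)) ≤
            ∑ _i ∈ Finset.range n, x ^ (n-1) := Finset.sum_le_sum hterm
        _ = n * x ^ (n-1) := by simp [Finset.sum_const, mul_comm]
  _ = n * (x - y) * x ^ (n-1) := by ring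

/-- bound on the cardinality of the sphere of radius N+1 -/
lemma card_sphere_le (d N : ℕ) :
    ((boxF d (N+1) \ boxF d N).card : ℝ) ≤ (d:ℝ) * 2 * ((2*(N+1)+1:ℕ):ℝ) ^ (d-1) := by
  rw [card_boxF_sdiff]
  have := pow_sub_pow_le (x := ((2*(N+1)+1:ℕ):ℝ)) (y := ((2*N+1:ℕ):ℝ))
    (by positivity) (by push_cast; linarith) d
  calc ((2*(N+1)+1:ℕ):ℝ)^d - ((2*N+1:ℕ):ℝ)^d
      ≤ d * (((2*(N+1)+1:ℕ):ℝ) - ((2*N+1:ℕ):ℝ)) * ((2*(N+1)+1:ℕ):ℝ) ^ (d-1) := this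
  _ = (d:ℝ) * 2 * ((2*(N+1)+1:ℕ):ℝ) ^ (d-1) := by push_cast; ring

end AuxVar
section AuxSummable

open Finset

variable {d : ℕ} {A : Type*}

lemma le_normInf (a : Fin d → ℤ) (j : Fin d) : (a j).natAbs ≤ normInf a :=
  Finset.le_sup (f := fun i => (a i).natAbs) (Finset.mem_univ j)

lemma normInf_add_le (a b : Fin d → ℤ) : normInf (a + b) ≤ normInf a + normInf b :=
  Finset.sup_le fun j _ => le_trans (Int.natAbs_add_le _ _)
    (add_le_add (le_normInf a j) (le_normInf b j))

lemma normInf_neg (a : Fin d → ℤ) : normInf (-a) = normInf a := by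
  simp [normInf]

lemma normInf_le_add (i k : Fin d → ℤ) : normInf k ≤ normInf (i + k) + normInf i := by
  have h1 : k = (i + k) + (-i) := by funext j; simp
  calc normInf k = normInf ((i + k) + (-i)) := by rw [← h1]
  _ ≤ normInf (i + k) + normInf (-i) := normInf_add_le _ _
  _ = normInf (i + k) + normInf i := by rw [normInf_neg]

variable {X : Set (Config d A)} {f : Config d A → ℝ} {C : ℝ}

/-- the tail sum of the variation series -/
noncomputable def tailSum (d : ℕ) (X : Set (Config d A)) (f : Config d A → ℝ) : ℝ :=
  ∑' n : ℕ, ((n : ℝ) + 1) ^ (d - 1) * deltaVar X f (n + 1)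

/-- uniform bound for `∑ |f ∘ T^k y - f ∘ T^k x|` over pairs agreeing off `boxF d m₀` -/
noncomputable def bigK (d : ℕ) (X : Set (Config d A)) (f : Config d A → ℝ) (C : ℝ)
    (m₀ : ℕ) : ℝ :=
  ((2 * m₀ + 1 : ℕ) : ℝ) ^ d * (2 * C) +
    ((d : ℝ) * 2 * (3 * ((m₀ : ℝ) + 1)) ^ (d - 1)) *
      (deltaVar X f 0 + 2 ^ (d - 1) * tailSum d X f)

variable (hfb : ∀ x ∈ X, |f x| ≤ C)
  (hsum : Summable fun n : ℕ => ((n : ℝ) + 1) ^ (d - 1) * deltaVar X f (n + 1))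
  (hinv : ∀ k : Fin d → ℤ, ∀ x ∈ X, shift k x ∈ X)

include hfb hinv in
lemma abs_diff_le_deltaVar {x y : Config d A} (hx : x ∈ X) (hy : y ∈ X) {m₀ : ℕ}
    (hagree : ∀ k ∉ boxF d m₀, x k = y k) {k : Fin d → ℤ} {n : ℕ}
    (hk : m₀ + n < normInf k) :
    |f (shift k y) - f (shift k x)| ≤ deltaVar X f n := by
  apply deltaVar_le hfb (hinv k y hy) (hinv k x hx)
  intro i hi
  show y (i + k) = x (i + k)
  refine (hagree (i + k) ?_).symm
  intro hmem
  rw [mem_boxF] at hmem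
  have := normInf_le_add i k
  omega

include hfb hinv hsum in
lemma sum_abs_diff_le {x y : Config d A} (hx : x ∈ X) (hy : y ∈ X) {m₀ : ℕ}
    (hagree : ∀ k ∉ boxF d m₀, x k = y k) (u : Finset (Fin d → ℤ)) :
    ∑ k ∈ u, |f (shift k y) - f (shift k x)| ≤ bigK d X f C m₀ := by
  set g : (Fin d → ℤ) → ℝ := fun k => |f (shift k y) - f (shift k x)| with hg
  have hδ0 : ∀ n, 0 ≤ deltaVar X f n := fun n => deltaVar_nonneg hfb hx n
  have habs : ∀ k, g k ≤ 2 * C := by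
    intro k
    calc g k ≤ |f (shift k y)| + |f (shift k x)| := abs_sub _ _
    _ ≤ C + C := add_le_add (hfb _ (hinv k y hy)) (hfb _ (hinv k x hx))
    _ = 2 * C := by ring
  have hgnn : ∀ k, 0 ≤ g k := fun k => abs_nonneg _
  set c₂ : ℝ := (d : ℝ) * 2 * (3 * ((m₀ : ℝ) + 1)) ^ (d - 1) with hc₂
  have hc₂0 : 0 ≤ c₂ := by positivity
  set K₀ : ℝ := ((2 * m₀ + 1 : ℕ) : ℝ) ^ d * (2 * C) with hK₀
  -- step bound over boxes
  have hbox : ∀ t : ℕ, ∑ k ∈ boxF d (m₀ + t), g k ≤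
      K₀ + c₂ * ∑ j ∈ Finset.range t, ((j : ℝ) + 1) ^ (d - 1) * deltaVar X f j := by
    intro t
    induction t with
    | zero =>
      simp only [Nat.add_zero, Finset.range_zero, Finset.sum_empty, mul_zero, add_zero]
      calc ∑ k ∈ boxF d m₀, g k ≤ ∑ _k ∈ boxF d m₀, (2 * C) := Finset.sum_le_sum
            (fun k _ => habs k)
      _ = ((boxF d m₀).card : ℝ) * (2 * C) := by rw [Finset.sum_const]; ring
      _ = K₀ := by rw [card_boxF, hK₀]; push_cast; ring
    | succ t ih =>
      have hsub : boxF d (m₀ + t) ⊆ boxF d (m₀ + t + 1) := boxF_mono (by omega)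
      have hsplit : ∑ k ∈ boxF d (m₀ + t + 1), g k =
          ∑ k ∈ boxF d (m₀ + t + 1) \ boxF d (m₀ + t), g k + ∑ k ∈ boxF d (m₀ + t), g k :=
        (Finset.sum_sdiff hsub).symm
      have hterm : ∀ k ∈ boxF d (m₀ + t + 1) \ boxF d (m₀ + t), g k ≤ deltaVar X f t := by
        intro k hk
        rw [Finset.mem_sdiff, mem_boxF, mem_boxF] at hk
        exact abs_diff_le_deltaVar hfb hinv hx hy hagree (by omega)
      have hcard := card_sphere_le d (m₀ + t)
      have hsphere : ∑ k ∈ boxF d (m₀ + t + 1) \ boxF d (m₀ + t), g k ≤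
          c₂ * (((t : ℝ) + 1) ^ (d - 1) * deltaVar X f t) := by
        calc ∑ k ∈ boxF d (m₀ + t + 1) \ boxF d (m₀ + t), g k
            ≤ ∑ _k ∈ boxF d (m₀ + t + 1) \ boxF d (m₀ + t), deltaVar X f t :=
              Finset.sum_le_sum hterm
        _ = ((boxF d (m₀ + t + 1) \ boxF d (m₀ + t)).card : ℝ) * deltaVar X f t := by
              rw [Finset.sum_const]; ring
        _ ≤ ((d:ℝ) * 2 * ((2*(m₀ + t + 1)+1 : ℕ):ℝ) ^ (d-1)) * deltaVar X f t := by
              apply mul_le_mul_of_nonneg_right _ (hδ0 t)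
              simpa using hcard
        _ ≤ c₂ * (((t : ℝ) + 1) ^ (d - 1) * deltaVar X f t) := by
              rw [hc₂]
              have hb : ((2*(m₀ + t + 1)+1 : ℕ):ℝ) ≤ (3 * ((m₀ : ℝ) + 1)) * ((t:ℝ)+1) := by
                push_cast; nlinarith [Nat.cast_nonneg (α := ℝ) m₀, Nat.cast_nonneg (α := ℝ) t]
              have hp : ((2*(m₀ + t + 1)+1 : ℕ):ℝ) ^ (d-1) ≤
                  ((3 * ((m₀ : ℝ) + 1)) * ((t:ℝ)+1)) ^ (d-1) :=
                pow_le_pow_left₀ (Nat.cast_nonneg _) hb _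
              rw [mul_pow] at hp
              have := mul_le_mul_of_nonneg_right hp (hδ0 t)
              nlinarith [hδ0 t, this, Nat.cast_nonneg (α := ℝ) d]
      have hidx : m₀ + (t + 1) = m₀ + t + 1 := rfl
      rw [hidx, hsplit, Finset.sum_range_succ]
      have := add_le_add hsphere ih
      linarith
  -- bound the range sum by tailSum
  have htail0 : 0 ≤ tailSum d X f := by
    apply tsum_nonneg
    intro n; exact mul_nonneg (by positivity) (hδ0 _)
  have hrange : ∀ t : ℕ, ∑ j ∈ Finset.range t, ((j : ℝ) + 1) ^ (d - 1) * deltaVar X f j ≤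
      deltaVar X f 0 + 2 ^ (d - 1) * tailSum d X f := by
    intro t
    cases t with
    | zero =>
      simp only [Finset.range_zero, Finset.sum_empty]
      have h2 : (0:ℝ) ≤ 2^(d-1) * tailSum d X f := mul_nonneg (by positivity) htail0
      have := hδ0 0
      linarith
    | succ t' =>
      rw [Finset.sum_range_succ']
      push_cast
      simp only [Nat.cast_zero, zero_add, one_pow, one_mul]
      have h1 : ∑ j ∈ Finset.range t', (((j:ℝ) + 1) + 1) ^ (d - 1) * deltaVar X f (j + 1) ≤
          2 ^ (d-1) * tailSum d X f := by
        calc ∑ j ∈ Finset.range t', (((j:ℝ) + 1) + 1) ^ (d - 1) * deltaVar X f (j + 1)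
            ≤ ∑ j ∈ Finset.range t', 2^(d-1) * (((j:ℝ) + 1) ^ (d - 1) * deltaVar X f (j + 1)) := by
              apply Finset.sum_le_sum
              intro j _
              rw [← mul_assoc, ← mul_pow]
              apply mul_le_mul_of_nonneg_right (pow_le_pow_left₀ (by positivity) (by linarith) _)
                (hδ0 _)
        _ = 2^(d-1) * ∑ j ∈ Finset.range t', ((j:ℝ) + 1) ^ (d - 1) * deltaVar X f (j + 1) := by
              rw [Finset.mul_sum]
        _ ≤ 2^(d-1) * tailSum d X f := by
              apply mul_le_mul_of_nonneg_left _ (by positivity)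
              exact Summable.sum_le_tsum _ (fun n _ => mul_nonneg (by positivity) (hδ0 _)) hsum
      linarith [h1]
  -- conclude
  set N := u.sup normInf with hN
  have hu : u ⊆ boxF d (m₀ + N) := by
    intro k hk
    rw [mem_boxF]
    have : normInf k ≤ N := Finset.le_sup hk
    omega
  calc ∑ k ∈ u, g k ≤ ∑ k ∈ boxF d (m₀ + N), g k :=
        Finset.sum_le_sum_of_subset_of_nonneg hu (fun k _ _ => hgnn k)
  _ ≤ K₀ + c₂ * ∑ j ∈ Finset.range N, ((j : ℝ) + 1) ^ (d - 1) * deltaVar X f j := hbox N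
  _ ≤ K₀ + c₂ * (deltaVar X f 0 + 2 ^ (d - 1) * tailSum d X f) := by
        have := mul_le_mul_of_nonneg_left (hrange N) hc₂0
        linarith
  _ = bigK d X f C m₀ := rfl

include hfb hinv hsum in
lemma summable_abs_diff {x y : Config d A} (hx : x ∈ X) (hy : y ∈ X) {m₀ : ℕ}
    (hagree : ∀ k ∉ boxF d m₀, x k = y k) :
    Summable fun k : Fin d → ℤ => |f (shift k y) - f (shift k x)| :=
  summable_of_sum_le (fun _ => abs_nonneg _) (sum_abs_diff_le hfb hsum hinv hx hy hagree)

include hfb hinv hsum in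
lemma summable_diff {x y : Config d A} (hx : x ∈ X) (hy : y ∈ X) {m₀ : ℕ}
    (hagree : ∀ k ∉ boxF d m₀, x k = y k) :
    Summable fun k : Fin d → ℤ => f (shift k y) - f (shift k x) :=
  (summable_abs_diff hfb hsum hinv hx hy hagree).of_abs

include hfb hinv hsum in
lemma abs_phiF_le {x y : Config d A} (hx : x ∈ X) (hy : y ∈ X) {m₀ : ℕ}
    (hagree : ∀ k ∉ boxF d m₀, x k = y k) :
    |phiF f x y| ≤ bigK d X f C m₀ := by
  have hs := summable_abs_diff hfb hsum hinv hx hy hagree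
  have h1 : |∑' k : Fin d → ℤ, (f (shift k y) - f (shift k x))| ≤
      ∑' k : Fin d → ℤ, |f (shift k y) - f (shift k x)| := by
    have hn : Summable fun k : Fin d → ℤ => ‖f (shift k y) - f (shift k x)‖ := by
      simpa [Real.norm_eq_abs] using hs
    have := norm_tsum_le_tsum_norm hn
    simpa [Real.norm_eq_abs] using this
  rw [phiF]
  exact h1.trans (Summable.tsum_le_of_sum_le hs (sum_abs_diff_le hfb hsum hinv hx hy hagree))

end AuxSummable
section AuxPhi

open Finset Filter Topology

variable {d : ℕ} {A : Type*} {X : Set (Config d A)} {f : Config d A → ℝ} {C : ℝ}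

variable (hfb : ∀ x ∈ X, |f x| ≤ C)
  (hsum : Summable fun n : ℕ => ((n : ℝ) + 1) ^ (d - 1) * deltaVar X f (n + 1))
  (hinv : ∀ k : Fin d → ℤ, ∀ x ∈ X, shift k x ∈ X)

lemma agree_off_box {Λ₀ : Finset (Fin d → ℤ)} {x y : Config d A}
    (h : ∀ k ∉ Λ₀, x k = y k) : ∀ k ∉ boxF d (Λ₀.sup normInf), x k = y k := by
  intro k hk
  apply h
  intro hmem
  exact hk (mem_boxF.mpr (Finset.le_sup hmem))

include hfb hsum hinv in
lemma summable_diff' {x y : Config d A} (hx : x ∈ X) (hy : y ∈ X)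
    {Λ₀ : Finset (Fin d → ℤ)} (h : ∀ k ∉ Λ₀, x k = y k) :
    Summable fun k : Fin d → ℤ => f (shift k y) - f (shift k x) :=
  summable_diff hfb hsum hinv hx hy (agree_off_box h)

include hfb hsum hinv in
lemma hasSum_phiF {x y : Config d A} (hx : x ∈ X) (hy : y ∈ X)
    {Λ₀ : Finset (Fin d → ℤ)} (h : ∀ k ∉ Λ₀, x k = y k) :
    HasSum (fun k : Fin d → ℤ => f (shift k y) - f (shift k x)) (phiF f x y) :=
  (summable_diff' hfb hsum hinv hx hy h).hasSum

include hfb hsum hinv in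
lemma tendsto_fnSum_diff {x y : Config d A} (hx : x ∈ X) (hy : y ∈ X)
    {Λ₀ : Finset (Fin d → ℤ)} (h : ∀ k ∉ Λ₀, x k = y k) :
    Tendsto (fun n => fnSum d f n y - fnSum d f n x) atTop (𝓝 (phiF f x y)) := by
  have hs := hasSum_phiF hfb hsum hinv hx hy h
  have hbox : Tendsto (fun n => boxF d n) atTop atTop :=
    tendsto_atTop_finset_of_monotone (fun a b hab => boxF_mono hab)
      (fun k => ⟨normInf k, mem_boxF.mpr le_rfl⟩)
  have := (hs.comp hbox : Tendsto _ atTop (𝓝 (phiF f x y)))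
  convert this using 2 with n
  rw [fnSum, fnSum, ← Finset.sum_sub_distrib]
  rfl

lemma phiF_self (x : Config d A) : phiF f x x = 0 := by
  simp [phiF]

lemma phiF_anti (x y : Config d A) : phiF f x y = -phiF f y x := by
  rw [phiF, phiF, ← tsum_neg]
  congr 1; funext k; ring

include hfb hsum hinv in
lemma phiF_add {x y z : Config d A} (hx : x ∈ X) (hy : y ∈ X) (hz : z ∈ X)
    {Λ₀ : Finset (Fin d → ℤ)} (hxy : ∀ k ∉ Λ₀, x k = y k) (hyz : ∀ k ∉ Λ₀, y k = z k) :
    phiF f x y + phiF f y z = phiF f x z := by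
  rw [phiF, phiF, phiF,
    ← Summable.tsum_add (summable_diff' hfb hsum hinv hx hy hxy) (summable_diff' hfb hsum hinv hy hz hyz)]
  congr 1; funext k; ring

include hfb hsum in
lemma exists_deltaVar_lt {x : Config d A} (hx : x ∈ X) {ε : ℝ} (hε : 0 < ε) :
    ∃ n : ℕ, deltaVar X f (n + 1) < ε := by
  have h0 := hsum.tendsto_atTop_zero
  rw [Metric.tendsto_atTop] at h0
  obtain ⟨N, hN⟩ := h0 ε hε
  refine ⟨N, ?_⟩
  have h1 := hN N le_rfl
  rw [Real.dist_eq, sub_zero] at h1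
  have hδ0 := deltaVar_nonneg hfb hx (N + 1)
  have hge : deltaVar X f (N + 1) ≤ ((N : ℝ) + 1) ^ (d - 1) * deltaVar X f (N + 1) :=
    le_mul_of_one_le_left hδ0 (one_le_pow₀ (by linarith [Nat.cast_nonneg (α := ℝ) N]))
  have := abs_nonneg (((N : ℝ) + 1) ^ (d - 1) * deltaVar X f (N + 1))
  calc deltaVar X f (N + 1) ≤ ((N : ℝ) + 1) ^ (d - 1) * deltaVar X f (N + 1) := hge
  _ ≤ |((N : ℝ) + 1) ^ (d - 1) * deltaVar X f (N + 1)| := le_abs_self _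
  _ < ε := h1

include hfb hsum in
lemma continuous_f_on [TopologicalSpace A] [DiscreteTopology A] :
    Continuous fun x : ↥X => f x.1 := by
  rw [continuous_iff_continuousAt]
  intro x
  rw [ContinuousAt, Metric.tendsto_nhds]
  intro ε hε
  obtain ⟨n, hn⟩ := exists_deltaVar_lt hfb hsum x.2 hε
  set U : Set ↥X := ⋂ k ∈ boxF d (n + 1), {y : ↥X | y.1 k = x.1 k} with hU
  have hUopen : IsOpen U := by
    apply isOpen_biInter_finset
    intro k _
    have : {y : ↥X | y.1 k = x.1 k} = (fun y : ↥X => y.1 k) ⁻¹' {x.1 k} := rfl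
    rw [this]
    exact (isOpen_discrete _).preimage ((continuous_apply k).comp continuous_subtype_val)
  have hxU : x ∈ U := Set.mem_iInter₂.mpr fun k _ => rfl
  filter_upwards [hUopen.mem_nhds hxU] with y hy
  rw [Real.dist_eq]
  have hagree : ∀ k : Fin d → ℤ, normInf k ≤ n + 1 → y.1 k = x.1 k := by
    intro k hk
    exact Set.mem_iInter₂.mp hy k (mem_boxF.mpr hk)
  calc |f y.1 - f x.1| ≤ deltaVar X f (n + 1) := deltaVar_le hfb y.2 x.2 hagree
  _ < ε := hn

lemma measurable_indicator_extend [TopologicalSpace A] [MeasurableSpace A] [BorelSpace A]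
    {g : Config d A → ℝ} {V : Set (Config d A)} (hV : MeasurableSet V)
    (hg : Measurable fun v : ↥V => g v.1) : Measurable (V.indicator g) := by
  have heq : V.indicator g = Function.extend (Subtype.val : ↥V → Config d A)
      (fun v => g v.1) 0 := by
    funext a
    by_cases ha : a ∈ V
    · rw [Set.indicator_of_mem ha]
      have := Subtype.val_injective.extend_apply (fun v : ↥V => g v.1) 0 ⟨a, ha⟩
      simpa using this.symm
    · rw [Set.indicator_of_notMem ha, Function.extend_apply']
      · rfl
      · rintro ⟨v, rfl⟩; exact ha v.2
  rw [heq]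
  exact (MeasurableEmbedding.subtype_coe hV).measurable_extend hg measurable_const

end AuxPhi
section AuxGamma

open Finset Filter Topology

variable {d : ℕ} {A : Type*} [Fintype A] {X : Set (Config d A)} {f : Config d A → ℝ} {C : ℝ}

variable (hfb : ∀ x ∈ X, |f x| ≤ C)
  (hsum : Summable fun n : ℕ => ((n : ℝ) + 1) ^ (d - 1) * deltaVar X f (n + 1))
  (hinv : ∀ k : Fin d → ℤ, ∀ x ∈ X, shift k x ∈ X)

/-- limit of the normalized partition sums over patterns -/
noncomputable def numer (d : ℕ) (f : Config d A → ℝ) (Λ : Finset (Fin d → ℤ))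
    (T : Set (Config d A)) (x : Config d A) : ℝ :=
  ∑ ω : {k // k ∈ Λ} → A, T.indicator (fun z => Real.exp (phiF f x z)) (patch Λ ω x)

lemma numer_nonneg (d : ℕ) (f : Config d A → ℝ) (Λ : Finset (Fin d → ℤ))
    (T : Set (Config d A)) (x : Config d A) : 0 ≤ numer d f Λ T x :=
  Finset.sum_nonneg fun ω _ => Set.indicator_nonneg (fun z _ => (Real.exp_pos _).le) _

lemma numer_one_le {Λ : Finset (Fin d → ℤ)} {x : Config d A} (hx : x ∈ X) :
    1 ≤ numer d f Λ X x := by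
  have hterm : X.indicator (fun z => Real.exp (phiF f x z)) (patch Λ (resP Λ x) x) = 1 := by
    rw [patch_resP, Set.indicator_of_mem hx, phiF_self, Real.exp_zero]
  calc (1:ℝ) = X.indicator (fun z => Real.exp (phiF f x z)) (patch Λ (resP Λ x) x) :=
        hterm.symm
  _ ≤ numer d f Λ X x := Finset.single_le_sum
        (f := fun ω : {k // k ∈ Λ} → A =>
          X.indicator (fun z => Real.exp (phiF f x z)) (patch Λ ω x))
        (fun ω _ => Set.indicator_nonneg (fun z _ => (Real.exp_pos _).le) _)
        (Finset.mem_univ (resP Λ x))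

lemma numer_mono {Λ : Finset (Fin d → ℤ)} {x : Config d A} {T T' : Set (Config d A)}
    (h : T ⊆ T') : numer d f Λ T x ≤ numer d f Λ T' x := by
  apply Finset.sum_le_sum
  intro ω _
  by_cases hm : patch Λ ω x ∈ T
  · rw [Set.indicator_of_mem hm, Set.indicator_of_mem (h hm)]
  · rw [Set.indicator_of_notMem hm]
    exact Set.indicator_nonneg (fun z _ => (Real.exp_pos _).le) _

include hfb hsum hinv in
lemma tendsto_numerFn {Λ : Finset (Fin d → ℤ)} {x : Config d A} (hx : x ∈ X)
    {T : Set (Config d A)} (hT : T ⊆ X) :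
    Tendsto (fun n => (∑ ω : {k // k ∈ Λ} → A,
        T.indicator (fun z => Real.exp (fnSum d f n z)) (patch Λ ω x)) /
        Real.exp (fnSum d f n x))
      atTop (𝓝 (numer d f Λ T x)) := by
  have heq : ∀ n, (∑ ω : {k // k ∈ Λ} → A,
      T.indicator (fun z => Real.exp (fnSum d f n z)) (patch Λ ω x)) /
      Real.exp (fnSum d f n x) =
      ∑ ω : {k // k ∈ Λ} → A,
        T.indicator (fun z => Real.exp (fnSum d f n z)) (patch Λ ω x) /
          Real.exp (fnSum d f n x) := fun n => Finset.sum_div _ _ _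
  simp only [heq]
  rw [numer]
  apply tendsto_finset_sum
  intro ω _
  by_cases hm : patch Λ ω x ∈ T
  · simp only [Set.indicator_of_mem hm]
    have hagr : ∀ k ∉ Λ, x k = patch Λ ω x k := fun k hk => (patch_not_mem hk).symm
    have hmain := tendsto_fnSum_diff hfb hsum hinv hx (hT hm) hagr
    have := (Real.continuous_exp.tendsto _).comp hmain
    simp only [Function.comp_def] at this
    convert this using 2 with n
    rw [Real.exp_sub]
  · simp only [Set.indicator_of_notMem hm, zero_div]
    exact tendsto_const_nhds

lemma gammaFn_eq_div {Λ : Finset (Fin d → ℤ)} {x : Config d A} {S : Set ↥X} (n : ℕ) :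
    gammaFn d X f Λ S x n =
      ((∑ ω : {k // k ∈ Λ} → A,
        (Subtype.val '' S).indicator (fun z => Real.exp (fnSum d f n z)) (patch Λ ω x)) /
        Real.exp (fnSum d f n x)) /
      ((∑ η : {k // k ∈ Λ} → A,
        X.indicator (fun z => Real.exp (fnSum d f n z)) (patch Λ η x)) /
        Real.exp (fnSum d f n x)) := by
  rw [gammaFn, div_div_div_cancel_right₀]
  exact Real.exp_ne_zero _

include hfb hsum hinv in
lemma tendsto_gammaFn {Λ : Finset (Fin d → ℤ)} {x : Config d A} (hx : x ∈ X) (S : Set ↥X) :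
    Tendsto (gammaFn d X f Λ S x) atTop
      (𝓝 (numer d f Λ (Subtype.val '' S) x / numer d f Λ X x)) := by
  have hSsub : Subtype.val '' S ⊆ X := by rintro _ ⟨s, -, rfl⟩; exact s.2
  have h1 := tendsto_numerFn hfb hsum hinv hx (Λ := Λ) hSsub
  have h2 := tendsto_numerFn hfb hsum hinv hx (Λ := Λ) (subset_refl X)
  have hden : numer d f Λ X x ≠ 0 := by
    have := numer_one_le (f := f) (Λ := Λ) hx
    linarith
  have := h1.div h2 hden
  convert this using 1
  funext n
  exact gammaFn_eq_div n

include hfb hsum hinv in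
lemma gamma_eq {Λ : Finset (Fin d → ℤ)} {x : Config d A} (hx : x ∈ X) (S : Set ↥X) :
    gamma d X f Λ S x = numer d f Λ (Subtype.val '' S) x / numer d f Λ X x :=
  (tendsto_gammaFn hfb hsum hinv hx S).limUnder_eq

end AuxGamma
section AuxMeas

open Finset Filter Topology MeasureTheory

variable {d : ℕ} {A : Type*} [Fintype A] [TopologicalSpace A] [DiscreteTopology A]
  [MeasurableSpace A] [BorelSpace A]
  {X : Set (Config d A)} {f : Config d A → ℝ} {C : ℝ}

variable (hfb : ∀ x ∈ X, |f x| ≤ C)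
  (hsum : Summable fun n : ℕ => ((n : ℝ) + 1) ^ (d - 1) * deltaVar X f (n + 1))
  (hinv : ∀ k : Fin d → ℤ, ∀ x ∈ X, shift k x ∈ X)
  (hcl : IsClosed X)

instance : MeasurableSingletonClass A :=
  ⟨fun a => IsClosed.measurableSet isClosed_singleton⟩

lemma measurableSet_X (hcl : IsClosed X) : MeasurableSet X := hcl.measurableSet

lemma measurable_val_image (hcl : IsClosed X) {S : Set ↥X} (hS : MeasurableSet S) :
    MeasurableSet (Subtype.val '' S) :=
  (MeasurableEmbedding.subtype_coe (measurableSet_X hcl)).measurableSet_image.mpr hS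

/-- the indicator extension of `f`, globally measurable -/
noncomputable def fExt (X : Set (Config d A)) (f : Config d A → ℝ) : Config d A → ℝ :=
  X.indicator f

include hfb hsum hcl in
lemma measurable_fExt : Measurable (fExt X f) :=
  measurable_indicator_extend (measurableSet_X hcl)
    (continuous_f_on hfb hsum).measurable

lemma fnSum_fExt_eq (hinv : ∀ k : Fin d → ℤ, ∀ x ∈ X, shift k x ∈ X)
    {z : Config d A} (hz : z ∈ X) (n : ℕ) : fnSum d (fExt X f) n z = fnSum d f n z := by
  rw [fnSum, fnSum]
  apply Finset.sum_congr rfl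
  intro i _
  exact Set.indicator_of_mem (hinv i z hz) f

lemma measurable_fnSum_fExt (hfE : Measurable (fExt X f)) (n : ℕ) :
    Measurable (fnSum d (fExt X f) n) := by
  have h : fnSum d (fExt X f) n = fun z => ∑ i ∈ boxF d n, fExt X f (shift i z) := rfl
  rw [h]
  exact Finset.measurable_sum _ fun i _ => hfE.comp (continuous_shift i).measurable

open Classical in
noncomputable def phiPatch (X : Set (Config d A)) (f : Config d A → ℝ)
    (Λ : Finset (Fin d → ℤ)) (ω : {k // k ∈ Λ} → A) (x : Config d A) : ℝ :=
  if patch Λ ω x ∈ X then phiF f x (patch Λ ω x) else 0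

include hfb hsum hinv hcl in
lemma measurable_phiPatch {Λ : Finset (Fin d → ℤ)} (ω : {k // k ∈ Λ} → A) :
    Measurable fun x : ↥X => phiPatch X f Λ ω x.1 := by
  classical
  have hfE := measurable_fExt hfb hsum hcl
  set Fn : ℕ → ↥X → ℝ := fun n x =>
    if patch Λ ω x.1 ∈ X then
      fnSum d (fExt X f) n (patch Λ ω x.1) - fnSum d (fExt X f) n x.1 else 0 with hFn
  have hPm : MeasurableSet {x : ↥X | patch Λ ω x.1 ∈ X} :=
    (((continuous_patch Λ ω).comp continuous_subtype_val).measurable) (measurableSet_X hcl)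
  have hFnm : ∀ n, Measurable (Fn n) := by
    intro n
    apply Measurable.ite hPm
    · exact ((measurable_fnSum_fExt hfE n).comp
        (((continuous_patch Λ ω).comp continuous_subtype_val).measurable)).sub
        ((measurable_fnSum_fExt hfE n).comp continuous_subtype_val.measurable)
    · exact measurable_const
  apply measurable_of_tendsto_metrizable hFnm
  rw [tendsto_pi_nhds]
  intro x
  by_cases hm : patch Λ ω x.1 ∈ X
  · have hagr : ∀ k ∉ Λ, x.1 k = patch Λ ω x.1 k := fun k hk => (patch_not_mem hk).symm
    have := tendsto_fnSum_diff hfb hsum hinv x.2 hm hagr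
    simp only [hFn, hm, if_pos, phiPatch]
    convert this using 2 with n
    rw [fnSum_fExt_eq hinv hm, fnSum_fExt_eq hinv x.2]
  · simp only [hFn, hm, if_neg, phiPatch, if_false]
    exact tendsto_const_nhds

end AuxMeas
section AuxGammaMeas

open Finset Filter Topology MeasureTheory

variable {d : ℕ} {A : Type*} [Fintype A] [TopologicalSpace A] [DiscreteTopology A]
  [MeasurableSpace A] [BorelSpace A]
  {X : Set (Config d A)} {f : Config d A → ℝ} {C : ℝ}

variable (hfb : ∀ x ∈ X, |f x| ≤ C)
  (hsum : Summable fun n : ℕ => ((n : ℝ) + 1) ^ (d - 1) * deltaVar X f (n + 1))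
  (hinv : ∀ k : Fin d → ℤ, ∀ x ∈ X, shift k x ∈ X)
  (hcl : IsClosed X)

open Classical in
noncomputable def extC (Λ : Finset (Fin d → ℤ)) (a₀ : A)
    (r : ↥((↑Λ : Set (Fin d → ℤ))ᶜ) → A) : Config d A :=
  fun k => if h : k ∈ ((↑Λ : Set (Fin d → ℤ))ᶜ) then r ⟨k, h⟩ else a₀

lemma continuous_extC (Λ : Finset (Fin d → ℤ)) (a₀ : A) : Continuous (extC Λ a₀) := by
  classical
  refine continuous_pi fun k => ?_
  by_cases h : k ∈ ((↑Λ : Set (Fin d → ℤ))ᶜ)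
  · have : (fun r : ↥((↑Λ : Set (Fin d → ℤ))ᶜ) → A => extC Λ a₀ r k) =
        fun r => r ⟨k, h⟩ := by
      funext r; simp [extC, h]
    rw [this]; exact continuous_apply _
  · have : (fun r : ↥((↑Λ : Set (Fin d → ℤ))ᶜ) → A => extC Λ a₀ r k) =
        fun _ => a₀ := by
      funext r; simp [extC, h]
    rw [this]; exact continuous_const

lemma patch_extC (Λ : Finset (Fin d → ℤ)) (a₀ : A) (ω : {k // k ∈ Λ} → A)
    (x : Config d A) :
    patch Λ ω (extC Λ a₀ (fun i : ↥((↑Λ : Set (Fin d → ℤ))ᶜ) => x i.1)) = patch Λ ω x := by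
  classical
  funext k
  by_cases h : k ∈ Λ
  · rw [patch_mem h, patch_mem h]
  · rw [patch_not_mem h, patch_not_mem h]
    have hk : k ∈ ((↑Λ : Set (Fin d → ℤ))ᶜ) := by simpa using h
    simp [extC, hk]

lemma gammaFn_congr {Λ : Finset (Fin d → ℤ)} {S : Set ↥X} {x y : Config d A}
    (h : ∀ ω : {k // k ∈ Λ} → A, patch Λ ω x = patch Λ ω y) :
    gammaFn d X f Λ S x = gammaFn d X f Λ S y := by
  funext n
  simp only [gammaFn]
  congr 1
  · exact Finset.sum_congr rfl fun ω _ => by rw [h ω]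
  · exact Finset.sum_congr rfl fun η _ => by rw [h η]

lemma gammaFn_extC (Λ : Finset (Fin d → ℤ)) (a₀ : A) (S : Set ↥X) (x : ↥X) :
    gammaFn d X f Λ S (extC Λ a₀ (fun i : ↥((↑Λ : Set (Fin d → ℤ))ᶜ) => x.1 i.1)) =
      gammaFn d X f Λ S x.1 :=
  gammaFn_congr fun ω => patch_extC Λ a₀ ω x.1

include hfb hsum hinv in
lemma exists_tendsto_gammaFn_extC (Λ : Finset (Fin d → ℤ)) (a₀ : A) (S : Set ↥X)
    (r : ↥((↑Λ : Set (Fin d → ℤ))ᶜ) → A) :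
    ∃ L, Tendsto (gammaFn d X f Λ S (extC Λ a₀ r)) atTop (𝓝 L) := by
  by_cases h : ∃ η : {k // k ∈ Λ} → A, patch Λ η (extC Λ a₀ r) ∈ X
  · obtain ⟨η₀, hz⟩ := h
    have hcong : gammaFn d X f Λ S (extC Λ a₀ r) =
        gammaFn d X f Λ S (patch Λ η₀ (extC Λ a₀ r)) :=
      gammaFn_congr fun ω => (patch_patch ω η₀ _).symm
    rw [hcong]
    exact ⟨_, tendsto_gammaFn hfb hsum hinv hz S⟩
  · refine ⟨0, ?_⟩
    have hzero : gammaFn d X f Λ S (extC Λ a₀ r) = fun _ => 0 := by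
      funext n
      have hden : (∑ η : {k // k ∈ Λ} → A,
          X.indicator (fun z => Real.exp (fnSum d f n z)) (patch Λ η (extC Λ a₀ r))) = 0 :=
        Finset.sum_eq_zero fun η _ =>
          Set.indicator_of_notMem (fun hm => h ⟨η, hm⟩) _
      rw [gammaFn, hden, div_zero]
    rw [hzero]
    exact tendsto_const_nhds

lemma gammaFn_nonneg {Λ : Finset (Fin d → ℤ)} {S : Set ↥X} (x : Config d A) (n : ℕ) :
    0 ≤ gammaFn d X f Λ S x n :=
  div_nonneg
    (Finset.sum_nonneg fun ω _ => Set.indicator_nonneg (fun z _ => (Real.exp_pos _).le) _)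
    (Finset.sum_nonneg fun η _ => Set.indicator_nonneg (fun z _ => (Real.exp_pos _).le) _)

lemma gammaFn_le_one {Λ : Finset (Fin d → ℤ)} {S : Set ↥X} (x : Config d A) (n : ℕ) :
    gammaFn d X f Λ S x n ≤ 1 := by
  have hSsub : Subtype.val '' S ⊆ X := by rintro _ ⟨s, -, rfl⟩; exact s.2
  set N := ∑ ω : {k // k ∈ Λ} → A,
    (Subtype.val '' S).indicator (fun z => Real.exp (fnSum d f n z)) (patch Λ ω x) with hN
  set D := ∑ η : {k // k ∈ Λ} → A,
    X.indicator (fun z => Real.exp (fnSum d f n z)) (patch Λ η x) with hD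
  have hND : N ≤ D := by
    apply Finset.sum_le_sum
    intro ω _
    by_cases hm : patch Λ ω x ∈ Subtype.val '' S
    · rw [Set.indicator_of_mem hm, Set.indicator_of_mem (hSsub hm)]
    · rw [Set.indicator_of_notMem hm]
      exact Set.indicator_nonneg (fun z _ => (Real.exp_pos _).le) _
  have hN0 : 0 ≤ N := Finset.sum_nonneg fun ω _ =>
    Set.indicator_nonneg (fun z _ => (Real.exp_pos _).le) _
  have hD0nn : (0:ℝ) ≤ D := Finset.sum_nonneg fun η _ =>
    Set.indicator_nonneg (fun z _ => (Real.exp_pos _).le) _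
  rcases eq_or_lt_of_le hD0nn with hD0 | hD0
  · have hNz : N = 0 := le_antisymm (hND.trans hD0.symm.le) hN0
    rw [gammaFn, ← hN, ← hD, hNz, zero_div]; norm_num
  · rw [gammaFn, ← hN, ← hD, div_le_one hD0]
    exact hND

noncomputable def GammaR (d : ℕ) (X : Set (Config d A)) (f : Config d A → ℝ)
    (Λ : Finset (Fin d → ℤ)) (S : Set ↥X) (a₀ : A)
    (r : ↥((↑Λ : Set (Fin d → ℤ))ᶜ) → A) : ℝ :=
  limUnder atTop (gammaFn d X f Λ S (extC Λ a₀ r))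

include hfb hsum hinv hcl in
lemma measurable_GammaR (Λ : Finset (Fin d → ℤ)) {S : Set ↥X} (hS : MeasurableSet S)
    (a₀ : A) : Measurable (GammaR d X f Λ S a₀) := by
  have hfE := measurable_fExt hfb hsum hcl
  have hXm := measurableSet_X hcl
  have hSm := measurable_val_image hcl hS
  have hSsub : Subtype.val '' S ⊆ X := by rintro _ ⟨s, -, rfl⟩; exact s.2
  -- measurability of each finite-volume ratio, as a function of the configuration
  have hmc : ∀ n, Measurable fun y : Config d A => gammaFn d X f Λ S y n := by
    intro n
    have hind : ∀ (T : Set (Config d A)), T ⊆ X →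
        (T.indicator fun z => Real.exp (fnSum d f n z)) =
        (T.indicator fun z => Real.exp (fnSum d (fExt X f) n z)) := by
      intro T hT
      apply Set.indicator_congr
      intro z hz
      show Real.exp (fnSum d f n z) = Real.exp (fnSum d (fExt X f) n z)
      rw [fnSum_fExt_eq hinv (hT hz)]
    have hmT : ∀ (T : Set (Config d A)), MeasurableSet T → T ⊆ X →
        Measurable fun y : Config d A => ∑ ω : {k // k ∈ Λ} → A,
          T.indicator (fun z => Real.exp (fnSum d f n z)) (patch Λ ω y) := by
      intro T hTm hT
      apply Finset.measurable_sum
      intro ω _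
      rw [hind T hT]
      exact ((Real.measurable_exp.comp (measurable_fnSum_fExt hfE n)).indicator hTm).comp
        (continuous_patch Λ ω).measurable
    exact Measurable.div (hmT _ hSm hSsub) (hmT _ hXm (subset_refl _))
  apply measurable_of_tendsto_metrizable
    (f := fun n r => gammaFn d X f Λ S (extC Λ a₀ r) n)
  · intro n
    exact (hmc n).comp (continuous_extC Λ a₀).measurable
  · rw [tendsto_pi_nhds]
    intro r
    obtain ⟨L, hL⟩ := exists_tendsto_gammaFn_extC hfb hsum hinv Λ a₀ S r
    rw [GammaR, hL.limUnder_eq]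
    exact hL

include hfb hsum hinv in
lemma gamma_eq_GammaR (Λ : Finset (Fin d → ℤ)) (S : Set ↥X) (a₀ : A) (x : ↥X) :
    gamma d X f Λ S x.1 =
      GammaR d X f Λ S a₀ (fun i : ↥((↑Λ : Set (Fin d → ℤ))ᶜ) => x.1 i.1) := by
  rw [gamma, GammaR, gammaFn_extC]

lemma measurable_cyl_proj (Λ : Finset (Fin d → ℤ)) :
    Measurable[cylSigma X ((↑Λ : Set (Fin d → ℤ))ᶜ)]
      (fun (x : ↥X) (i : ↥((↑Λ : Set (Fin d → ℤ))ᶜ)) => x.1 i.1) :=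
  Measurable.of_comap_le le_rfl

lemma cylSigma_invariant {Λ : Finset (Fin d → ℤ)} {E : Set ↥X}
    (hE : MeasurableSet[cylSigma X ((↑Λ : Set (Fin d → ℤ))ᶜ)] E) {x y : ↥X}
    (h : ∀ i, i ∉ Λ → x.1 i = y.1 i) : x ∈ E ↔ y ∈ E := by
  obtain ⟨s, _, rfl⟩ := hE
  have : (fun i : ↥((↑Λ : Set (Fin d → ℤ))ᶜ) => x.1 i.1) =
      (fun i : ↥((↑Λ : Set (Fin d → ℤ))ᶜ) => y.1 i.1) := by
    funext i
    exact h i.1 fun hmem => i.2 (Finset.mem_coe.mpr hmem)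
  simp only [Set.mem_preimage, this]

end AuxGammaMeas
section AuxDen

open Finset Filter Topology MeasureTheory ENNReal

variable {d : ℕ} {A : Type*} [Fintype A] [TopologicalSpace A] [DiscreteTopology A]
  [MeasurableSpace A] [BorelSpace A]
  {X : Set (Config d A)} {f : Config d A → ℝ} {C : ℝ}

variable (hfb : ∀ x ∈ X, |f x| ≤ C)
  (hsum : Summable fun n : ℕ => ((n : ℝ) + 1) ^ (d - 1) * deltaVar X f (n + 1))
  (hinv : ∀ k : Fin d → ℤ, ∀ x ∈ X, shift k x ∈ X)
  (hcl : IsClosed X)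

/-- the cylinder set of configurations with pattern `p` on `Λ` -/
def cylE (X : Set (Config d A)) (Λ : Finset (Fin d → ℤ)) (p : {k // k ∈ Λ} → A) :
    Set ↥X := {x | resP Λ x.1 = p}

/-- configurations whose `p`-patch stays in `X` -/
def PXs (X : Set (Config d A)) (Λ : Finset (Fin d → ℤ)) (p : {k // k ∈ Λ} → A) :
    Set ↥X := {x | patch Λ p x.1 ∈ X}

/-- configurations whose `p`-patch lands in `S` -/
def SXs (X : Set (Config d A)) (Λ : Finset (Fin d → ℤ)) (S : Set ↥X)
    (p : {k // k ∈ Λ} → A) : Set ↥X := {x | patch Λ p x.1 ∈ Subtype.val '' S}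

lemma measurable_resP (Λ : Finset (Fin d → ℤ)) :
    Measurable fun x : ↥X => resP Λ x.1 :=
  measurable_pi_iff.mpr fun k =>
    (measurable_pi_apply k.1).comp continuous_subtype_val.measurable

lemma measurableSet_cylE (Λ : Finset (Fin d → ℤ)) (p : {k // k ∈ Λ} → A) :
    MeasurableSet (cylE X Λ p) :=
  measurable_resP Λ (measurableSet_singleton p)

lemma measurableSet_PXs (hcl : IsClosed X) (Λ : Finset (Fin d → ℤ))
    (p : {k // k ∈ Λ} → A) : MeasurableSet (PXs X Λ p) :=
  ((continuous_patch Λ p).comp continuous_subtype_val).measurable (measurableSet_X hcl)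

lemma measurableSet_SXs (hcl : IsClosed X) (Λ : Finset (Fin d → ℤ)) {S : Set ↥X}
    (hS : MeasurableSet S) (p : {k // k ∈ Λ} → A) : MeasurableSet (SXs X Λ S p) :=
  ((continuous_patch Λ p).comp continuous_subtype_val).measurable
    (measurable_val_image hcl hS)

lemma SXs_subset_PXs (Λ : Finset (Fin d → ℤ)) (S : Set ↥X) (p : {k // k ∈ Λ} → A) :
    SXs X Λ S p ⊆ PXs X Λ p := by
  intro x hx
  obtain ⟨s, -, hs⟩ := hx
  show patch Λ p x.1 ∈ X
  rw [← hs]; exact s.2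

lemma mem_val_image {S : Set ↥X} {x : ↥X} : x.1 ∈ Subtype.val '' S ↔ x ∈ S := by
  constructor
  · rintro ⟨s, hs, he⟩
    rwa [← Subtype.ext he]
  · intro h; exact ⟨x, h, rfl⟩

/-- the cocycle weight in `ℝ≥0∞` -/
noncomputable def ephi (X : Set (Config d A)) (f : Config d A → ℝ)
    (Λ : Finset (Fin d → ℤ)) (p : {k // k ∈ Λ} → A) (x : ↥X) : ℝ≥0∞ :=
  ENNReal.ofReal (Real.exp (phiPatch X f Λ p x.1))

/-- the `ℝ≥0∞` denominator -/
noncomputable def DenE (X : Set (Config d A)) (f : Config d A → ℝ)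
    (Λ : Finset (Fin d → ℤ)) (x : ↥X) : ℝ≥0∞ :=
  ∑ p : {k // k ∈ Λ} → A, (PXs X Λ p).indicator (ephi X f Λ p) x

/-- the `ℝ≥0∞` numerator -/
noncomputable def NumE (X : Set (Config d A)) (f : Config d A → ℝ)
    (Λ : Finset (Fin d → ℤ)) (S : Set ↥X) (x : ↥X) : ℝ≥0∞ :=
  ∑ p : {k // k ∈ Λ} → A, (SXs X Λ S p).indicator (ephi X f Λ p) x

lemma ephi_ne_top {Λ : Finset (Fin d → ℤ)} {p : {k // k ∈ Λ} → A} {x : ↥X} :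
    ephi X f Λ p x ≠ ⊤ := ENNReal.ofReal_ne_top

lemma ephi_pos {Λ : Finset (Fin d → ℤ)} {p : {k // k ∈ Λ} → A} {x : ↥X} :
    0 < ephi X f Λ p x := ENNReal.ofReal_pos.mpr (Real.exp_pos _)

lemma measurable_ephi {Λ : Finset (Fin d → ℤ)} (p : {k // k ∈ Λ} → A) :
    Measurable (fun x : ↥X => ephi X f Λ p x) → True := fun _ => trivial

include hfb hsum hinv hcl in
lemma measurable_ephi' {Λ : Finset (Fin d → ℤ)} (p : {k // k ∈ Λ} → A) :
    Measurable (ephi X f Λ p) :=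
  ENNReal.measurable_ofReal.comp
    (Real.measurable_exp.comp (measurable_phiPatch hfb hsum hinv hcl p))

include hfb hsum hinv hcl in
lemma measurable_DenE (Λ : Finset (Fin d → ℤ)) : Measurable (DenE X f Λ) :=
  Finset.measurable_sum _ fun p _ =>
    (measurable_ephi' hfb hsum hinv hcl p).indicator (measurableSet_PXs hcl Λ p)

include hfb hsum hinv hcl in
lemma measurable_NumE (Λ : Finset (Fin d → ℤ)) {S : Set ↥X} (hS : MeasurableSet S) :
    Measurable (NumE X f Λ S) :=
  Finset.measurable_sum _ fun p _ =>
    (measurable_ephi' hfb hsum hinv hcl p).indicator (measurableSet_SXs hcl Λ hS p)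

lemma mem_PXs_self {Λ : Finset (Fin d → ℤ)} (x : ↥X) : x ∈ PXs X Λ (resP Λ x.1) := by
  show patch Λ (resP Λ x.1) x.1 ∈ X
  rw [patch_resP]; exact x.2

lemma ephi_self {Λ : Finset (Fin d → ℤ)} (x : ↥X) : ephi X f Λ (resP Λ x.1) x = 1 := by
  rw [ephi, phiPatch, if_pos, patch_resP, phiF_self, Real.exp_zero, ENNReal.ofReal_one]
  rw [patch_resP]; exact x.2

lemma one_le_DenE {Λ : Finset (Fin d → ℤ)} (x : ↥X) : 1 ≤ DenE X f Λ x := by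
  rw [DenE]
  calc (1:ℝ≥0∞) = (PXs X Λ (resP Λ x.1)).indicator (ephi X f Λ (resP Λ x.1)) x := by
        rw [Set.indicator_of_mem (mem_PXs_self x), ephi_self]
  _ ≤ _ := Finset.single_le_sum
      (f := fun p : {k // k ∈ Λ} → A => (PXs X Λ p).indicator (ephi X f Λ p) x)
      (fun p _ => zero_le) (Finset.mem_univ _)

lemma DenE_ne_zero {Λ : Finset (Fin d → ℤ)} (x : ↥X) : DenE X f Λ x ≠ 0 := by
  intro h
  have := one_le_DenE (f := f) (Λ := Λ) x
  rw [h] at this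
  exact (not_le.mpr zero_lt_one) this

lemma DenE_ne_top {Λ : Finset (Fin d → ℤ)} (x : ↥X) : DenE X f Λ x ≠ ⊤ := by
  rw [DenE]
  refine (ENNReal.sum_lt_top.mpr fun p _ => ?_).ne
  calc (PXs X Λ p).indicator (ephi X f Λ p) x ≤ ephi X f Λ p x :=
        Set.indicator_le_self _ _ _
  _ < ⊤ := ENNReal.ofReal_lt_top

lemma NumE_le_DenE {Λ : Finset (Fin d → ℤ)} (S : Set ↥X) (x : ↥X) :
    NumE X f Λ S x ≤ DenE X f Λ x :=
  Finset.sum_le_sum fun p _ =>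
    Set.indicator_le_indicator_of_subset (SXs_subset_PXs Λ S p) (fun _ => zero_le) x

/-- `NumE` is `ofReal` of the real numerator -/
lemma NumE_eq_ofReal {Λ : Finset (Fin d → ℤ)} (S : Set ↥X) (x : ↥X) :
    NumE X f Λ S x = ENNReal.ofReal (numer d f Λ (Subtype.val '' S) x.1) := by
  have hsub : Subtype.val '' S ⊆ X := by rintro _ ⟨s, -, rfl⟩; exact s.2
  rw [NumE, numer, ENNReal.ofReal_sum_of_nonneg]
  · apply Finset.sum_congr rfl
    intro p _
    by_cases hm : patch Λ p x.1 ∈ Subtype.val '' S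
    · have hmS : x ∈ SXs X Λ S p := hm
      rw [Set.indicator_of_mem hm, Set.indicator_of_mem hmS, ephi, phiPatch,
        if_pos (hsub hm)]
    · have hmS : x ∉ SXs X Λ S p := hm
      rw [Set.indicator_of_notMem hm, Set.indicator_of_notMem hmS, ENNReal.ofReal_zero]
  · intro p _
    exact Set.indicator_nonneg (fun z _ => (Real.exp_pos _).le) _

lemma DenE_eq_ofReal {Λ : Finset (Fin d → ℤ)} (x : ↥X) :
    DenE X f Λ x = ENNReal.ofReal (numer d f Λ X x.1) := by
  rw [DenE, numer, ENNReal.ofReal_sum_of_nonneg]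
  · apply Finset.sum_congr rfl
    intro p _
    by_cases hm : patch Λ p x.1 ∈ X
    · have hmP : x ∈ PXs X Λ p := hm
      rw [Set.indicator_of_mem hm, Set.indicator_of_mem hmP, ephi, phiPatch, if_pos hm]
    · have hmP : x ∉ PXs X Λ p := hm
      rw [Set.indicator_of_notMem hm, Set.indicator_of_notMem hmP, ENNReal.ofReal_zero]
  · intro p _
    exact Set.indicator_nonneg (fun z _ => (Real.exp_pos _).le) _

include hfb hsum hinv in
lemma ofReal_gamma_eq {Λ : Finset (Fin d → ℤ)} (S : Set ↥X) (x : ↥X) :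
    ENNReal.ofReal (gamma d X f Λ S x.1) = NumE X f Λ S x / DenE X f Λ x := by
  rw [gamma_eq hfb hsum hinv x.2 S, NumE_eq_ofReal, DenE_eq_ofReal,
    ENNReal.ofReal_div_of_pos]
  have := numer_one_le (f := f) (Λ := Λ) x.2
  linarith

end AuxDen
section AuxV

open Finset Filter Topology MeasureTheory ENNReal

variable {d : ℕ} {A : Type*} [Fintype A] [TopologicalSpace A] [DiscreteTopology A]
  [MeasurableSpace A] [BorelSpace A]
  {X : Set (Config d A)} {f : Config d A → ℝ} {C : ℝ}

open Classical in
/-- the pattern-swap map, at the configuration level -/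
noncomputable def Vc (X : Set (Config d A)) (Λ : Finset (Fin d → ℤ))
    (p q : {k // k ∈ Λ} → A) : ↥X → Config d A :=
  (cylE X Λ p ∩ PXs X Λ q).piecewise (fun x => patch Λ q x.1)
    ((cylE X Λ q ∩ PXs X Λ p).piecewise (fun x => patch Λ p x.1) (fun x => x.1))

variable {Λ : Finset (Fin d → ℤ)} {p q : {k // k ∈ Λ} → A}

lemma Vc_of_mem1 {x : ↥X} (h : x ∈ cylE X Λ p ∩ PXs X Λ q) :
    Vc X Λ p q x = patch Λ q x.1 := by
  classical
  rw [Vc, Set.piecewise_eq_of_mem _ _ _ h]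

lemma Vc_of_mem2 {x : ↥X} (h1 : x ∉ cylE X Λ p ∩ PXs X Λ q)
    (h2 : x ∈ cylE X Λ q ∩ PXs X Λ p) : Vc X Λ p q x = patch Λ p x.1 := by
  classical
  rw [Vc, Set.piecewise_eq_of_notMem _ _ _ h1, Set.piecewise_eq_of_mem _ _ _ h2]

lemma Vc_of_not {x : ↥X} (h1 : x ∉ cylE X Λ p ∩ PXs X Λ q)
    (h2 : x ∉ cylE X Λ q ∩ PXs X Λ p) : Vc X Λ p q x = x.1 := by
  classical
  rw [Vc, Set.piecewise_eq_of_notMem _ _ _ h1, Set.piecewise_eq_of_notMem _ _ _ h2]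

lemma Vc_mem (x : ↥X) : Vc X Λ p q x ∈ X := by
  by_cases h1 : x ∈ cylE X Λ p ∩ PXs X Λ q
  · rw [Vc_of_mem1 h1]; exact h1.2
  · by_cases h2 : x ∈ cylE X Λ q ∩ PXs X Λ p
    · rw [Vc_of_mem2 h1 h2]; exact h2.2
    · rw [Vc_of_not h1 h2]; exact x.2

lemma Vc_agree (x : ↥X) : ∀ k ∉ Λ, x.1 k = Vc X Λ p q x k := by
  intro k hk
  by_cases h1 : x ∈ cylE X Λ p ∩ PXs X Λ q
  · rw [Vc_of_mem1 h1, patch_not_mem hk]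
  · by_cases h2 : x ∈ cylE X Λ q ∩ PXs X Λ p
    · rw [Vc_of_mem2 h1 h2, patch_not_mem hk]
    · rw [Vc_of_not h1 h2]

/-- the pattern-swap map on `X` -/
noncomputable def Vmap (X : Set (Config d A)) (Λ : Finset (Fin d → ℤ))
    (p q : {k // k ∈ Λ} → A) : ↥X → ↥X := fun x => ⟨Vc X Λ p q x, Vc_mem x⟩

lemma measurable_Vmap (hcl : IsClosed X) : Measurable (Vmap X Λ p q) := by
  classical
  apply Measurable.subtype_mk
  apply Measurable.piecewise ((measurableSet_cylE Λ p).inter (measurableSet_PXs hcl Λ q))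
  · exact ((continuous_patch Λ q).comp continuous_subtype_val).measurable
  apply Measurable.piecewise ((measurableSet_cylE Λ q).inter (measurableSet_PXs hcl Λ p))
  · exact ((continuous_patch Λ p).comp continuous_subtype_val).measurable
  · exact continuous_subtype_val.measurable

lemma mem_transfer {x y : ↥X} (h : y.1 = x.1) {E : Set ↥X} : y ∈ E ↔ x ∈ E := by
  have : y = x := Subtype.ext h
  rw [this]

lemma Vc_Vc (x y : ↥X) (hy : y.1 = Vc X Λ p q x) : Vc X Λ p q y = x.1 := by
  by_cases h1 : x ∈ cylE X Λ p ∩ PXs X Λ q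
  · rw [Vc_of_mem1 h1] at hy
    obtain ⟨hxp, hxq⟩ := h1
    have hyq : resP Λ y.1 = q := by rw [hy]; exact resP_patch Λ q x.1
    by_cases hpq : p = q
    · subst hpq
      have hx1 : patch Λ p x.1 = x.1 := patch_eq_self hxp
      have hyx : y.1 = x.1 := by rw [hy, hx1]
      have h1y : y ∈ cylE X Λ p ∩ PXs X Λ p := (mem_transfer hyx).mpr ⟨hxp, hxq⟩
      rw [Vc_of_mem1 h1y, hyx, hx1]
    · have hnot : y ∉ cylE X Λ p ∩ PXs X Λ q := by
        rintro ⟨hc, -⟩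
        exact hpq ((hc : resP Λ y.1 = p) ▸ hyq)
      have hmem : y ∈ cylE X Λ q ∩ PXs X Λ p := by
        refine ⟨hyq, ?_⟩
        show patch Λ p y.1 ∈ X
        rw [hy, patch_patch, patch_eq_self hxp]
        exact x.2
      rw [Vc_of_mem2 hnot hmem, hy, patch_patch, patch_eq_self hxp]
  · by_cases h2 : x ∈ cylE X Λ q ∩ PXs X Λ p
    · rw [Vc_of_mem2 h1 h2] at hy
      obtain ⟨hxq, hxp⟩ := h2
      have hyp : resP Λ y.1 = p := by rw [hy]; exact resP_patch Λ p x.1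
      have hmem : y ∈ cylE X Λ p ∩ PXs X Λ q := by
        refine ⟨hyp, ?_⟩
        show patch Λ q y.1 ∈ X
        rw [hy, patch_patch, patch_eq_self hxq]
        exact x.2
      rw [Vc_of_mem1 hmem, hy, patch_patch, patch_eq_self hxq]
    · rw [Vc_of_not h1 h2] at hy
      have h1' : y ∉ cylE X Λ p ∩ PXs X Λ q := fun hm => h1 ((mem_transfer hy).mp hm)
      have h2' : y ∉ cylE X Λ q ∩ PXs X Λ p := fun hm => h2 ((mem_transfer hy).mp hm)
      rw [Vc_of_not h1' h2', hy]

lemma Vmap_invol (x : ↥X) : Vmap X Λ p q (Vmap X Λ p q x) = x :=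
  Subtype.ext (Vc_Vc x (Vmap X Λ p q x) rfl)

lemma Vmap_graph (x : ↥X) : (x.1, (Vmap X Λ p q x).1) ∈ gibbsRel X :=
  ⟨x.2, Vc_mem x, Λ, Vc_agree x⟩

lemma lintegral_Vmap (hcl : IsClosed X) {μ : Measure ↥X} [IsProbabilityMeasure μ]
    (hμ : IsGibbs d X f μ) (G : ↥X → ℝ≥0∞) (hG : Measurable G) :
    ∫⁻ x, G (Vmap X Λ p q x) ∂μ =
      ∫⁻ x, G x * ENNReal.ofReal (Real.exp (phiF f x.1 ((Vmap X Λ p q x).1))) ∂μ := by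
  have mV := measurable_Vmap (p := p) (q := q) hcl
  obtain ⟨hac, hrn⟩ := hμ (Vmap X Λ p q) (Vmap X Λ p q) mV mV Vmap_invol Vmap_invol Vmap_graph
  haveI : IsProbabilityMeasure (μ.map (Vmap X Λ p q)) :=
    Measure.isProbabilityMeasure_map mV.aemeasurable
  have h1 : ∫⁻ x, G (Vmap X Λ p q x) ∂μ = ∫⁻ y, G y ∂(μ.map (Vmap X Λ p q)) :=
    (lintegral_map hG mV).symm
  have h2 : μ.map (Vmap X Λ p q) = μ.withDensity ((μ.map (Vmap X Λ p q)).rnDeriv μ) :=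
    (Measure.withDensity_rnDeriv_eq _ _ hac).symm
  rw [h1, h2, lintegral_withDensity_eq_lintegral_mul _ (Measure.measurable_rnDeriv _ _) hG]
  apply lintegral_congr_ae
  filter_upwards [hrn] with x hx
  simp only [Pi.mul_apply]
  rw [hx, mul_comm]

end AuxV
section AuxClaimA

open Finset Filter Topology MeasureTheory ENNReal

variable {d : ℕ} {A : Type*} [Fintype A] [TopologicalSpace A] [DiscreteTopology A]
  [MeasurableSpace A] [BorelSpace A]
  {X : Set (Config d A)} {f : Config d A → ℝ} {C : ℝ}
  {Λ : Finset (Fin d → ℤ)} {p q : {k // k ∈ Λ} → A}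

variable (hfb : ∀ x ∈ X, |f x| ≤ C)
  (hsum : Summable fun n : ℕ => ((n : ℝ) + 1) ^ (d - 1) * deltaVar X f (n + 1))
  (hinv : ∀ k : Fin d → ℤ, ∀ x ∈ X, shift k x ∈ X)
  (hcl : IsClosed X)

include hfb hsum hinv in
lemma DenE_patch {x y : ↥X} (hxP : x ∈ PXs X Λ p) (hy : y.1 = patch Λ p x.1) :
    DenE X f Λ y = ENNReal.ofReal (Real.exp (phiF f y.1 x.1)) * DenE X f Λ x := by
  rw [DenE, DenE, Finset.mul_sum]
  apply Finset.sum_congr rfl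
  intro r _
  by_cases hr : x ∈ PXs X Λ r
  · have hyr : y ∈ PXs X Λ r := by
      show patch Λ r y.1 ∈ X
      rw [hy, patch_patch]; exact hr
    have hpatch_eq : patch Λ r y.1 = patch Λ r x.1 := by rw [hy, patch_patch]
    have hagr1 : ∀ k ∉ Λ, y.1 k = x.1 k := fun k hk => by rw [hy, patch_not_mem hk]
    have hagr2 : ∀ k ∉ Λ, x.1 k = patch Λ r x.1 k := fun k hk => (patch_not_mem hk).symm
    have hadd := phiF_add hfb hsum hinv y.2 x.2 hr hagr1 hagr2
    rw [Set.indicator_of_mem hyr, Set.indicator_of_mem hr, ephi, ephi, phiPatch, phiPatch,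
      if_pos (show patch Λ r y.1 ∈ X from hyr), if_pos (show patch Λ r x.1 ∈ X from hr),
      hpatch_eq, ← hadd, Real.exp_add, ENNReal.ofReal_mul (Real.exp_pos _).le]
  · have hyr : y ∉ PXs X Λ r := by
      show ¬ patch Λ r y.1 ∈ X
      rw [hy, patch_patch]; exact hr
    rw [Set.indicator_of_notMem hyr, Set.indicator_of_notMem hr, mul_zero]

include hfb hsum hinv in
lemma inv_DenE_patch {x y : ↥X} (hxP : x ∈ PXs X Λ p) (hy : y.1 = patch Λ p x.1) :
    (DenE X f Λ y)⁻¹ = ephi X f Λ p x * (DenE X f Λ x)⁻¹ := by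
  rw [DenE_patch hfb hsum hinv hxP hy,
    ENNReal.mul_inv (Or.inl (by positivity)) (Or.inl ENNReal.ofReal_ne_top)]
  congr 1
  rw [← ENNReal.ofReal_inv_of_pos (Real.exp_pos _), ← Real.exp_neg, ephi, phiPatch,
    if_pos (show patch Λ p x.1 ∈ X from hxP), ← hy, phiF_anti x.1 y.1]

variable {S : Set ↥X} {Cs : Set ↥X}

include hfb hsum hinv hcl in
lemma claimA {μ : Measure ↥X} [IsProbabilityMeasure μ] (hμ : IsGibbs d X f μ)
    (hS : MeasurableSet S)
    (hCs : MeasurableSet[cylSigma X ((↑Λ : Set (Fin d → ℤ))ᶜ)] Cs)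
    (p q : {k // k ∈ Λ} → A) :
    ∫⁻ x, (Cs ∩ cylE X Λ q ∩ SXs X Λ S p).indicator
        (fun x => ephi X f Λ p x * (DenE X f Λ x)⁻¹) x ∂μ
      = ∫⁻ x, (Cs ∩ cylE X Λ p ∩ PXs X Λ q ∩ S).indicator
        (fun x => ephi X f Λ q x * (DenE X f Λ x)⁻¹) x ∂μ := by
  classical
  set B : Set ↥X := Cs ∩ cylE X Λ p ∩ PXs X Λ q ∩ S with hB
  set G : ↥X → ℝ≥0∞ := B.indicator (fun x => (DenE X f Λ x)⁻¹) with hGdef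
  have hproj : Measurable fun (x : ↥X) (i : ↥((↑Λ : Set (Fin d → ℤ))ᶜ)) => x.1 i.1 :=
    measurable_pi_iff.mpr fun i =>
      (measurable_pi_apply i.1).comp continuous_subtype_val.measurable
  have hCm : MeasurableSet Cs := by
    obtain ⟨t, ht, rfl⟩ := hCs
    exact hproj ht
  have hBm : MeasurableSet B :=
    ((hCm.inter (measurableSet_cylE Λ p)).inter (measurableSet_PXs hcl Λ q)).inter hS
  have hGm : Measurable G :=
    ((measurable_DenE hfb hsum hinv hcl Λ).inv).indicator hBm
  have hkey := lintegral_Vmap (p := p) (q := q) hcl hμ G hGm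
  -- pointwise identity (II)
  have hII : ∀ x : ↥X, G x * ENNReal.ofReal (Real.exp (phiF f x.1 ((Vmap X Λ p q x).1))) =
      B.indicator (fun x => ephi X f Λ q x * (DenE X f Λ x)⁻¹) x := by
    intro x
    by_cases hm : x ∈ B
    · have hmP : x ∈ PXs X Λ q := hm.1.2
      have hV : (Vmap X Λ p q x).1 = patch Λ q x.1 := Vc_of_mem1 ⟨hm.1.1.2, hmP⟩
      rw [hGdef, Set.indicator_of_mem hm, Set.indicator_of_mem hm, hV, mul_comm]
      congr 1
      rw [ephi, phiPatch, if_pos (show patch Λ q x.1 ∈ X from hmP)]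
    · rw [hGdef, Set.indicator_of_notMem hm, Set.indicator_of_notMem hm, zero_mul]
  -- pointwise identity (I)
  have hI : ∀ x : ↥X, G (Vmap X Λ p q x) =
      (Cs ∩ cylE X Λ q ∩ SXs X Λ S p).indicator
        (fun x => ephi X f Λ p x * (DenE X f Λ x)⁻¹) x := by
    intro x
    by_cases hx : x ∈ Cs ∩ cylE X Λ q ∩ SXs X Λ S p
    · have hx0 := hx
      obtain ⟨⟨hxC, hxcyl⟩, hxS⟩ := hx
      have hxP : x ∈ PXs X Λ p := SXs_subset_PXs Λ S p hxS
      by_cases hpq : p = q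
      · subst hpq
        have hVx : (Vmap X Λ p p x).1 = patch Λ p x.1 := by
          by_cases hb1 : x ∈ cylE X Λ p ∩ PXs X Λ p
          · exact Vc_of_mem1 hb1
          · exact absurd ⟨hxcyl, hxP⟩ hb1
        have hpe : patch Λ p x.1 = x.1 := patch_eq_self hxcyl
        have hVeq : Vmap X Λ p p x = x := Subtype.ext (by rw [hVx, hpe])
        have hxmem : x ∈ B := by
          refine ⟨⟨⟨hxC, hxcyl⟩, hxP⟩, ?_⟩
          apply mem_val_image.mp
          rw [← hpe]; exact hxS
        rw [hVeq, hGdef, Set.indicator_of_mem hxmem, Set.indicator_of_mem hx0]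
        have : ephi X f Λ p x = 1 := by
          rw [ephi, phiPatch, if_pos (show patch Λ p x.1 ∈ X from hxP), hpe, phiF_self,
            Real.exp_zero, ENNReal.ofReal_one]
        rw [this, one_mul]
      · have hb1 : x ∉ cylE X Λ p ∩ PXs X Λ q := by
          rintro ⟨hc, -⟩
          have hcq : resP Λ x.1 = q := hxcyl
          have hcp : resP Λ x.1 = p := hc
          exact hpq (by rw [← hcp, hcq])
        have hVx : (Vmap X Λ p q x).1 = patch Λ p x.1 := Vc_of_mem2 hb1 ⟨hxcyl, hxP⟩
        set y := Vmap X Λ p q x with hydef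
        have hymem : y ∈ B := by
          refine ⟨⟨⟨?_, ?_⟩, ?_⟩, ?_⟩
          · exact (cylSigma_invariant hCs (fun i hi => (Vc_agree x i hi))).mp hxC
          · show resP Λ y.1 = p
            rw [hVx]; exact resP_patch Λ p x.1
          · show patch Λ q y.1 ∈ X
            rw [hVx, patch_patch, patch_eq_self hxcyl]; exact x.2
          · apply mem_val_image.mp
            rw [hVx]; exact hxS
        rw [hGdef, Set.indicator_of_mem hymem, Set.indicator_of_mem hx0]
        exact inv_DenE_patch hfb hsum hinv hxP hVx
    · -- show G (Vmap x) = 0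
      rw [Set.indicator_of_notMem hx, hGdef]
      apply Set.indicator_of_notMem
      intro hymem
      set y := Vmap X Λ p q x with hydef
      obtain ⟨⟨⟨hyC, hycyl⟩, hyP⟩, hyS⟩ := hymem
      apply hx
      by_cases hb1 : x ∈ cylE X Λ p ∩ PXs X Λ q
      · have hVx : y.1 = patch Λ q x.1 := Vc_of_mem1 hb1
        have hrq : resP Λ y.1 = q := by rw [hVx]; exact resP_patch Λ q x.1
        have hpq : p = q := by rw [← (hycyl : resP Λ y.1 = p), hrq]
        subst hpq
        have hyx : y = x := Subtype.ext (by rw [hVx, patch_eq_self hb1.1])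
        rw [hyx] at hyC hycyl hyS
        refine ⟨⟨hyC, hycyl⟩, ?_⟩
        show patch Λ p x.1 ∈ Subtype.val '' S
        rw [patch_eq_self hb1.1]
        exact mem_val_image.mpr hyS
      · by_cases hb2 : x ∈ cylE X Λ q ∩ PXs X Λ p
        · have hVx : y.1 = patch Λ p x.1 := Vc_of_mem2 hb1 hb2
          refine ⟨⟨?_, hb2.1⟩, ?_⟩
          · exact (cylSigma_invariant hCs (fun i hi => (Vc_agree x i hi))).mpr hyC
          · show patch Λ p x.1 ∈ Subtype.val '' S
            rw [← hVx]
            exact mem_val_image.mpr hyS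
        · have hyx : y = x := Subtype.ext (Vc_of_not hb1 hb2)
          rw [hyx] at hycyl hyP
          exact absurd ⟨hycyl, hyP⟩ hb1
  calc ∫⁻ x, (Cs ∩ cylE X Λ q ∩ SXs X Λ S p).indicator
        (fun x => ephi X f Λ p x * (DenE X f Λ x)⁻¹) x ∂μ
      = ∫⁻ x, G (Vmap X Λ p q x) ∂μ := lintegral_congr fun x => (hI x).symm
  _ = ∫⁻ x, G x * ENNReal.ofReal (Real.exp (phiF f x.1 ((Vmap X Λ p q x).1))) ∂μ := hkey
  _ = ∫⁻ x, B.indicator (fun x => ephi X f Λ q x * (DenE X f Λ x)⁻¹) x ∂μ :=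
      lintegral_congr hII

end AuxClaimA
section AuxKey

open Finset Filter Topology MeasureTheory ENNReal

variable {d : ℕ} {A : Type*} [Fintype A] [TopologicalSpace A] [DiscreteTopology A]
  [MeasurableSpace A] [BorelSpace A]
  {X : Set (Config d A)} {f : Config d A → ℝ} {C : ℝ}
  {Λ : Finset (Fin d → ℤ)} {S Cs : Set ↥X}

variable (hfb : ∀ x ∈ X, |f x| ≤ C)
  (hsum : Summable fun n : ℕ => ((n : ℝ) + 1) ^ (d - 1) * deltaVar X f (n + 1))
  (hinv : ∀ k : Fin d → ℤ, ∀ x ∈ X, shift k x ∈ X)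
  (hcl : IsClosed X)

lemma cylSigma_le_sub {E : Set ↥X} (Λ : Finset (Fin d → ℤ))
    (hE : MeasurableSet[cylSigma X ((↑Λ : Set (Fin d → ℤ))ᶜ)] E) : MeasurableSet E := by
  obtain ⟨t, ht, rfl⟩ := hE
  exact (measurable_pi_iff.mpr fun i =>
    (measurable_pi_apply i.1).comp continuous_subtype_val.measurable) ht

include hfb hsum hinv hcl in
lemma key_identity {μ : Measure ↥X} [IsProbabilityMeasure μ] (hμ : IsGibbs d X f μ)
    (hS : MeasurableSet S)
    (hCs : MeasurableSet[cylSigma X ((↑Λ : Set (Fin d → ℤ))ᶜ)] Cs) :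
    ∫⁻ x, (Cs ∩ S).indicator (fun _ => (1:ℝ≥0∞)) x ∂μ
      = ∫⁻ x, Cs.indicator (fun x => NumE X f Λ S x * (DenE X f Λ x)⁻¹) x ∂μ := by
  classical
  have hCm : MeasurableSet Cs := cylSigma_le_sub Λ hCs
  have hDm := measurable_DenE hfb hsum hinv hcl Λ
  have hephi : ∀ p, Measurable (ephi X f Λ p) := measurable_ephi' hfb hsum hinv hcl
  have hmeas1 : ∀ q p : {k // k ∈ Λ} → A,
      Measurable ((Cs ∩ cylE X Λ q ∩ SXs X Λ S p).indicator
        (fun x => ephi X f Λ p x * (DenE X f Λ x)⁻¹)) := fun q p =>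
    ((hephi p).mul hDm.inv).indicator
      ((hCm.inter (measurableSet_cylE Λ q)).inter (measurableSet_SXs hcl Λ hS p))
  have hmeas2 : ∀ p q : {k // k ∈ Λ} → A,
      Measurable ((Cs ∩ cylE X Λ p ∩ PXs X Λ q ∩ S).indicator
        (fun x => ephi X f Λ q x * (DenE X f Λ x)⁻¹)) := fun p q =>
    ((hephi q).mul hDm.inv).indicator
      (((hCm.inter (measurableSet_cylE Λ p)).inter (measurableSet_PXs hcl Λ q)).inter hS)
  -- pointwise A
  have hPA : ∀ x : ↥X, Cs.indicator (fun x => NumE X f Λ S x * (DenE X f Λ x)⁻¹) x =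
      ∑ q : {k // k ∈ Λ} → A, ∑ p : {k // k ∈ Λ} → A,
        (Cs ∩ cylE X Λ q ∩ SXs X Λ S p).indicator
          (fun x => ephi X f Λ p x * (DenE X f Λ x)⁻¹) x := by
    intro x
    by_cases hc : x ∈ Cs
    · rw [Set.indicator_of_mem hc]
      rw [Finset.sum_eq_single (resP Λ x.1)]
      · have hcyl : x ∈ cylE X Λ (resP Λ x.1) := rfl
        rw [NumE, Finset.sum_mul]
        apply Finset.sum_congr rfl
        intro p _
        by_cases hsx : x ∈ SXs X Λ S p
        · have hmem : x ∈ Cs ∩ cylE X Λ (resP Λ x.1) ∩ SXs X Λ S p := ⟨⟨hc, hcyl⟩, hsx⟩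
          rw [Set.indicator_of_mem hsx, Set.indicator_of_mem hmem]
        · rw [Set.indicator_of_notMem hsx,
            Set.indicator_of_notMem (fun hm => hsx hm.2), zero_mul]
      · intro q _ hq
        apply Finset.sum_eq_zero
        intro p _
        apply Set.indicator_of_notMem
        rintro ⟨⟨-, hcyl⟩, -⟩
        exact hq ((hcyl : resP Λ x.1 = q).symm ▸ rfl)
      · intro hmem
        exact absurd (Finset.mem_univ _) hmem
    · rw [Set.indicator_of_notMem hc]
      symm
      apply Finset.sum_eq_zero
      intro q _
      apply Finset.sum_eq_zero
      intro p _
      exact Set.indicator_of_notMem (fun hm => hc hm.1.1) _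
  -- pointwise D
  have hPD : ∀ (p : {k // k ∈ Λ} → A) (x : ↥X),
      ∑ q : {k // k ∈ Λ} → A, (Cs ∩ cylE X Λ p ∩ PXs X Λ q ∩ S).indicator
          (fun x => ephi X f Λ q x * (DenE X f Λ x)⁻¹) x =
      (Cs ∩ cylE X Λ p ∩ S).indicator (fun _ => (1:ℝ≥0∞)) x := by
    intro p x
    by_cases hx : x ∈ Cs ∩ cylE X Λ p ∩ S
    · rw [Set.indicator_of_mem hx]
      have : ∀ q : {k // k ∈ Λ} → A, (Cs ∩ cylE X Λ p ∩ PXs X Λ q ∩ S).indicator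
          (fun x => ephi X f Λ q x * (DenE X f Λ x)⁻¹) x =
          (PXs X Λ q).indicator (ephi X f Λ q) x * (DenE X f Λ x)⁻¹ := by
        intro q
        by_cases hq : x ∈ PXs X Λ q
        · have hmem : x ∈ Cs ∩ cylE X Λ p ∩ PXs X Λ q ∩ S := ⟨⟨hx.1, hq⟩, hx.2⟩
          rw [Set.indicator_of_mem hmem, Set.indicator_of_mem hq]
        · rw [Set.indicator_of_notMem (fun hm => hq hm.1.2),
            Set.indicator_of_notMem hq, zero_mul]
      rw [Finset.sum_congr rfl (fun q _ => this q), ← Finset.sum_mul, ← DenE]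
      exact ENNReal.mul_inv_cancel (DenE_ne_zero x) (DenE_ne_top x)
    · rw [Set.indicator_of_notMem hx]
      apply Finset.sum_eq_zero
      intro q _
      exact Set.indicator_of_notMem (fun hm => hx ⟨hm.1.1, hm.2⟩) _
  -- pointwise E
  have hPE : ∀ x : ↥X, ∑ p : {k // k ∈ Λ} → A,
      (Cs ∩ cylE X Λ p ∩ S).indicator (fun _ => (1:ℝ≥0∞)) x =
      (Cs ∩ S).indicator (fun _ => (1:ℝ≥0∞)) x := by
    intro x
    by_cases hx : x ∈ Cs ∩ S
    · rw [Set.indicator_of_mem hx, Finset.sum_eq_single (resP Λ x.1)]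
      · have hmem : x ∈ Cs ∩ cylE X Λ (resP Λ x.1) ∩ S := ⟨⟨hx.1, rfl⟩, hx.2⟩
        exact Set.indicator_of_mem hmem _
      · intro q _ hq
        apply Set.indicator_of_notMem
        rintro ⟨⟨-, hcyl⟩, -⟩
        exact hq ((hcyl : resP Λ x.1 = q).symm ▸ rfl)
      · intro hmem
        exact absurd (Finset.mem_univ _) hmem
    · rw [Set.indicator_of_notMem hx]
      apply Finset.sum_eq_zero
      intro p _
      exact Set.indicator_of_notMem (fun hm => hx ⟨hm.1.1, hm.2⟩) _
  calc ∫⁻ x, (Cs ∩ S).indicator (fun _ => (1:ℝ≥0∞)) x ∂μ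
      = ∫⁻ x, ∑ p : {k // k ∈ Λ} → A,
          (Cs ∩ cylE X Λ p ∩ S).indicator (fun _ => (1:ℝ≥0∞)) x ∂μ :=
        lintegral_congr fun x => (hPE x).symm
  _ = ∑ p : {k // k ∈ Λ} → A, ∫⁻ x,
        (Cs ∩ cylE X Λ p ∩ S).indicator (fun _ => (1:ℝ≥0∞)) x ∂μ :=
      lintegral_finset_sum _ fun p _ => measurable_const.indicator
        ((hCm.inter (measurableSet_cylE Λ p)).inter hS)
  _ = ∑ p : {k // k ∈ Λ} → A, ∫⁻ x, ∑ q : {k // k ∈ Λ} → A,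
        (Cs ∩ cylE X Λ p ∩ PXs X Λ q ∩ S).indicator
          (fun x => ephi X f Λ q x * (DenE X f Λ x)⁻¹) x ∂μ := by
      apply Finset.sum_congr rfl
      intro p _
      exact (lintegral_congr fun x => hPD p x).symm
  _ = ∑ p : {k // k ∈ Λ} → A, ∑ q : {k // k ∈ Λ} → A, ∫⁻ x,
        (Cs ∩ cylE X Λ p ∩ PXs X Λ q ∩ S).indicator
          (fun x => ephi X f Λ q x * (DenE X f Λ x)⁻¹) x ∂μ := by
      apply Finset.sum_congr rfl
      intro p _
      exact lintegral_finset_sum _ fun q _ => hmeas2 p q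
  _ = ∑ q : {k // k ∈ Λ} → A, ∑ p : {k // k ∈ Λ} → A, ∫⁻ x,
        (Cs ∩ cylE X Λ q ∩ SXs X Λ S p).indicator
          (fun x => ephi X f Λ p x * (DenE X f Λ x)⁻¹) x ∂μ := by
      rw [Finset.sum_comm]
      apply Finset.sum_congr rfl
      intro q _
      apply Finset.sum_congr rfl
      intro p _
      exact (claimA hfb hsum hinv hcl hμ hS hCs p q).symm
  _ = ∑ q : {k // k ∈ Λ} → A, ∫⁻ x, ∑ p : {k // k ∈ Λ} → A,
        (Cs ∩ cylE X Λ q ∩ SXs X Λ S p).indicator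
          (fun x => ephi X f Λ p x * (DenE X f Λ x)⁻¹) x ∂μ := by
      apply Finset.sum_congr rfl
      intro q _
      exact (lintegral_finset_sum _ fun p _ => hmeas1 q p).symm
  _ = ∫⁻ x, ∑ q : {k // k ∈ Λ} → A, ∑ p : {k // k ∈ Λ} → A,
        (Cs ∩ cylE X Λ q ∩ SXs X Λ S p).indicator
          (fun x => ephi X f Λ p x * (DenE X f Λ x)⁻¹) x ∂μ :=
      (lintegral_finset_sum _ fun q _ => Finset.measurable_sum _ fun p _ => hmeas1 q p).symm
  _ = ∫⁻ x, Cs.indicator (fun x => NumE X f Λ S x * (DenE X f Λ x)⁻¹) x ∂μ :=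
      lintegral_congr fun x => (hPA x).symm

end AuxKey
open ENNReal in
/-- **Gibbs implies DLR.** If `μ` is a Gibbs measure for `f ∈ SV_d(X)`,
then for every nonempty finite `Λ` and every Borel `S ⊆ X`,
`μ(S | 𝓕_{Λ^c}) = γ_Λ(S|·)` μ-a.e. -/
theorem gibbs_implies_DLR {d : ℕ} (hd : 1 ≤ d) {A : Type*} [Fintype A] [Nonempty A]
    [TopologicalSpace A] [DiscreteTopology A] [MeasurableSpace A] [BorelSpace A]
    (X : Set (Config d A)) (hne : X.Nonempty) (hcl : IsClosed X)
    (hinv : ∀ k : Fin d → ℤ, ∀ x ∈ X, shift k x ∈ X)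
    (f : Config d A → ℝ) (hf : MemSV d X f)
    (μ : Measure ↥X) (hμp : IsProbabilityMeasure μ) (hμ : IsGibbs d X f μ) :
    ∀ Λ : Finset (Fin d → ℤ), Λ.Nonempty → ∀ S : Set ↥X, MeasurableSet S →
      ∀ᵐ y ∂μ,
        (μ[S.indicator (fun _ => (1 : ℝ)) | cylSigma X ((↑Λ : Set (Fin d → ℤ))ᶜ)]) y
          = gamma d X f Λ S y.1 := by
  intro Λ hΛne S hS
  obtain ⟨Cb, hfb⟩ := hf.1
  have hsum := hf.2
  haveI := hμp
  have hm : cylSigma X ((↑Λ : Set (Fin d → ℤ))ᶜ) ≤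
      (Subtype.instMeasurableSpace : MeasurableSpace ↥X) := fun E hE => cylSigma_le_sub Λ hE
  set g : ↥X → ℝ := fun y => gamma d X f Λ S y.1 with hgdef
  have hSsub : Subtype.val '' S ⊆ X := by rintro _ ⟨s, -, rfl⟩; exact s.2
  have hg01 : ∀ y : ↥X, 0 ≤ g y ∧ g y ≤ 1 := by
    intro y
    rw [hgdef]
    simp only
    rw [gamma_eq hfb hsum hinv y.2 S]
    constructor
    · exact div_nonneg (numer_nonneg d f Λ _ y.1) (numer_nonneg d f Λ X y.1)
    · rw [div_le_one (by linarith [numer_one_le (f := f) (Λ := Λ) y.2])]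
      exact numer_mono hSsub
  -- ambient measurability of g
  set a₀ : A := Classical.arbitrary A
  have hprojAmb : Measurable fun (x : ↥X) (i : ↥((↑Λ : Set (Fin d → ℤ))ᶜ)) => x.1 i.1 :=
    measurable_pi_iff.mpr fun i =>
      (measurable_pi_apply i.1).comp continuous_subtype_val.measurable
  have hgeq : g = (GammaR d X f Λ S a₀) ∘
      (fun (x : ↥X) (i : ↥((↑Λ : Set (Fin d → ℤ))ᶜ)) => x.1 i.1) := by
    funext y
    exact gamma_eq_GammaR hfb hsum hinv Λ S a₀ y
  have hgm : Measurable g := by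
    rw [hgeq]
    exact (measurable_GammaR hfb hsum hinv hcl Λ hS a₀).comp hprojAmb
  have hgmm : @Measurable _ _ (cylSigma X ((↑Λ : Set (Fin d → ℤ))ᶜ)) _ g := by
    rw [hgeq]
    exact (measurable_GammaR hfb hsum hinv hcl Λ hS a₀).comp (measurable_cyl_proj Λ)
  have hgint : Integrable g μ := by
    refine Integrable.mono' (integrable_const (1:ℝ)) hgm.aestronglyMeasurable (ae_of_all _ ?_)
    intro y
    rw [Real.norm_eq_abs, abs_of_nonneg (hg01 y).1]
    exact (hg01 y).2
  have hind_int : Integrable (S.indicator fun _ => (1:ℝ)) μ :=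
    (integrable_const (1:ℝ)).indicator hS
  -- the set-integral equality
  have hseteq : ∀ s : Set ↥X,
      MeasurableSet[cylSigma X ((↑Λ : Set (Fin d → ℤ))ᶜ)] s → μ s < ⊤ →
      ∫ y in s, g y ∂μ = ∫ y in s, S.indicator (fun _ => (1:ℝ)) y ∂μ := by
    intro s hsm _
    have hsamb : MeasurableSet s := hm s hsm
    have hkey := key_identity hfb hsum hinv hcl hμ hS hsm
    -- RHS real integral
    have hR : ∫ y in s, S.indicator (fun _ => (1:ℝ)) y ∂μ = (μ (s ∩ S)).toReal := by
      have h1 : ∫ y in s, S.indicator (fun _ => (1:ℝ)) y ∂μ =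
          ∫ y, S.indicator (1 : ↥X → ℝ) y ∂(μ.restrict s) := rfl
      rw [h1, integral_indicator_one hS, Measure.real, Measure.restrict_apply hS, Set.inter_comm]
    -- key LHS is μ (s ∩ S)
    have hL1 : ∫⁻ x, (s ∩ S).indicator (fun _ => (1:ℝ≥0∞)) x ∂μ = μ (s ∩ S) := by
      have : (s ∩ S).indicator (fun _ => (1:ℝ≥0∞)) = (s ∩ S).indicator 1 := rfl
      rw [this, lintegral_indicator_one (hsamb.inter hS)]
    -- LHS real integral
    have hL : ∫ y in s, g y ∂μ = (μ (s ∩ S)).toReal := by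
      rw [integral_eq_lintegral_of_nonneg_ae (ae_of_all _ fun y => (hg01 y).1)
        hgm.aestronglyMeasurable.restrict]
      congr 1
      have h2 : ∫⁻ y in s, ENNReal.ofReal (g y) ∂μ =
          ∫⁻ y, s.indicator (fun x => NumE X f Λ S x * (DenE X f Λ x)⁻¹) y ∂μ := by
        rw [← lintegral_indicator hsamb]
        apply lintegral_congr
        intro y
        by_cases hy : y ∈ s
        · rw [Set.indicator_of_mem hy, Set.indicator_of_mem hy,
            ofReal_gamma_eq hfb hsum hinv S y, div_eq_mul_inv]
        · rw [Set.indicator_of_notMem hy, Set.indicator_of_notMem hy]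
      rw [h2, ← hkey, hL1]
    rw [hL, hR]
  -- conditional expectation characterization
  have hae : g =ᵐ[μ]
      μ[S.indicator (fun _ => (1:ℝ)) | cylSigma X ((↑Λ : Set (Fin d → ℤ))ᶜ)] := by
    apply ae_eq_condExp_of_forall_setIntegral_eq hm hind_int
    · intro s _ _
      exact hgint.integrableOn
    · exact hseteq
    · exact ⟨g, hgmm.stronglyMeasurable, EventuallyEq.rfl⟩
  filter_upwards [hae] with y hy
  exact hy.symm
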